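/- arXiv:2301.01974 — 11 statements merged into one kernel-verified Lean document; each statement's English description precedes it below -/
import Mathlib

section
/- Let X be a real Banach space, let C be a bounded subset of X, let x be in the unit sphere S(X), and let α, δ > 0. Then d2(C, x, α) ≤ d1(C, x, δ) + 2α/δ. -/
open Metric Set Pointwise

variable {X : Type*} [NormedAddCommGroup X] [NormedSpace ℝ X]

/-- The seminorm `‖f‖_A = sup {|f x| : x ∈ A}` on the dual, for a bounded set `A ⊆ X`. -/
noncomputable def semiNormOn (A : Set X) (f : StrongDual ℝ X) : ℝ :=
  sSup ((fun x => |f x|) '' A)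

/-- `B_A(f, ε) = {g ∈ X* : ‖f − g‖_A < ε}`. -/
def ballOn (A : Set X) (f : StrongDual ℝ X) (ε : ℝ) : Set (StrongDual ℝ X) :=
  {g | semiNormOn A (f - g) < ε}

/-- `diam_A(B) = sup {‖f − g‖_A : f, g ∈ B}`. -/
noncomputable def diamOn (A : Set X) (B : Set (StrongDual ℝ X)) : ℝ :=
  sSup ((fun p : StrongDual ℝ X × StrongDual ℝ X =>
    semiNormOn A (p.1 - p.2)) '' (B ×ˢ B))

/-- The w*-slice `S(B(X*), x, δ) = {f ∈ B(X*) : f x > 1 − δ}`. -/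
def wslice (x : X) (δ : ℝ) : Set (StrongDual ℝ X) :=
  {f | ‖f‖ ≤ 1 ∧ 1 - δ < f x}

/-- `D(x) = {f ∈ S(X*) : f x = 1}`. -/
def dualD (x : X) : Set (StrongDual ℝ X) :=
  {f | ‖f‖ = 1 ∧ f x = 1}

/-- `D(E) = ⋃ {D(y) : y ∈ E}`. -/
def dualDSet (E : Set X) : Set (StrongDual ℝ X) :=
  ⋃ y ∈ E, dualD y

/-- `d1(C, x, δ) = sup {(‖x + λ y‖ + ‖x − λ y‖ − 2)/λ : 0 < λ < δ, y ∈ C}`. -/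
noncomputable def d1 (C : Set X) (x : X) (δ : ℝ) : ℝ :=
  sSup {t | ∃ l : ℝ, ∃ y ∈ C, 0 < l ∧ l < δ ∧ t = (‖x + l • y‖ + ‖x - l • y‖ - 2) / l}

/-- `d2(C, x, δ) = diam_C (S(B(X*), x, δ))`. -/
noncomputable def d2 (C : Set X) (x : X) (δ : ℝ) : ℝ :=
  diamOn C (wslice x δ)

/-- `d3(C, x, δ) = diam_C (D(S(X) ∩ B(x, δ)))`. -/
noncomputable def d3 (C : Set X) (x : X) (δ : ℝ) : ℝ :=
  diamOn C (dualDSet ({y | ‖y‖ = 1} ∩ ball x δ))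

/-- `M_{ε, δ, C}(X)`. -/
noncomputable def Mset (ε δ : ℝ) (C : Set X) : Set X :=
  {x | ‖x‖ = 1 ∧
    sSup {t | ∃ y ∈ C, 0 < ‖y‖ ∧ ‖y‖ < δ ∧ t = (‖x + y‖ + ‖x - y‖ - 2) / ‖y‖} < ε}

/-- `M_{ε, C}(X) = ⋃_{δ > 0} M_{ε, δ, C}(X)`. -/
noncomputable def MsetAll (ε : ℝ) (C : Set X) : Set X :=
  ⋃ δ > 0, Mset ε δ C

/-- A compatible class of bounded subsets of `X`. -/
structure IsCompatibleClass (𝒞 : Set (Set X)) : Prop where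
  bounded : ∀ C ∈ 𝒞, Bornology.IsBounded C
  smul_add_mem : ∀ C ∈ 𝒞, ∀ (a : ℝ) (x : X), (fun y => a • y + x) '' C ∈ 𝒞
  union_singleton_mem : ∀ C ∈ 𝒞, ∀ x : X, C ∪ {x} ∈ 𝒞
  closedAbsConvexHull_mem : ∀ C ∈ 𝒞, closure (absConvexHull ℝ C) ∈ 𝒞
  subset_mem : ∀ C ∈ 𝒞, ∀ A ⊆ C, A ∈ 𝒞
  union_mem : ∀ C₁ ∈ 𝒞, ∀ C₂ ∈ 𝒞, C₁ ∪ C₂ ∈ 𝒞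

/-- `f ∈ S(X*)` is a strong `𝒞`-semidenting point of `B(X*)`. -/
def IsStrongSemidenting (𝒞 : Set (Set X)) (f : StrongDual ℝ X) : Prop :=
  ∀ A ∈ 𝒞, ∀ ε : ℝ, 0 < ε → ∃ x : X, ‖x‖ = 1 ∧ ∃ δ : ℝ, 0 < δ ∧ δ < 1 ∧
    wslice x δ ⊆ ballOn A f ε

/-- A set is the intersection of the closed balls containing it. -/
def IsBallIntersection (D : Set X) : Prop :=
  D = ⋂₀ {B : Set X | (∃ z : X, ∃ r : ℝ, 0 < r ∧ B = closedBall z r) ∧ D ⊆ B}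

/-- `X` has the strong `𝒞`-MIP. -/
def HasStrongCMIP (𝒞 : Set (Set X)) : Prop :=
  ∀ C ∈ 𝒞, IsClosed C → Convex ℝ C → ∀ β : ℝ, 0 ≤ β →
    IsBallIntersection (closure (C + closedBall (0 : X) β))

/-- A support mapping: a selection of the duality map `D`. -/
def IsSupportMapping (φ : X → StrongDual ℝ X) : Prop :=
  ∀ x : X, ‖x‖ = 1 → φ x ∈ dualD x

/-- The duality map on `X` is norm-`τ` quasicontinuous. -/
def DualityMapQuasicontinuous (𝒞 : Set (Set X)) : Prop :=
  ∀ f : StrongDual ℝ X, ‖f‖ = 1 → ∀ ε : ℝ, 0 < ε → ∀ C ∈ 𝒞,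
    ∃ δ : ℝ, 0 < δ ∧ ∃ x : X, ‖x‖ = 1 ∧
      dualDSet ({y | ‖y‖ = 1} ∩ ball x δ) ⊆ ballOn C f ε

/-- `cone(A) = {λ a : λ ≥ 0, a ∈ A}`. -/
def coneOf (A : Set (StrongDual ℝ X)) : Set (StrongDual ℝ X) :=
  {g | ∃ l : ℝ, 0 ≤ l ∧ ∃ a ∈ A, g = l • a}

/-- `X` has the `𝒞`-UMIP. -/
def HasCUMIP (𝒞 : Set (Set X)) : Prop :=
  ∀ ε : ℝ, 0 < ε → ∀ M : ℝ, 2 ≤ M → ∃ K : ℝ, 0 < K ∧ ∃ η : ℝ, 0 < η ∧ η ≤ ε ∧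
    ∀ C ∈ 𝒞, IsClosed C → Convex ℝ C → Metric.diam C ≤ M → ε ≤ Metric.infDist 0 C →
      ∃ z₀ : X, ∃ r : ℝ, 0 < r ∧ r ≤ K ∧ C ⊆ closedBall z₀ r ∧
        η ≤ Metric.infDist 0 (closedBall z₀ r)

theorem stmt0 [CompleteSpace X] (C : Set X) (hC : Bornology.IsBounded C)
    (x : X) (hx : ‖x‖ = 1) (α δ : ℝ) (hα : 0 < α) (hδ : 0 < δ) :
    d2 C x α ≤ d1 C x δ + 2 * α / δ := by

  obtain ⟨M, hM⟩ := hC.subset_closedBall 0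
  have hMy : ∀ y ∈ C, ‖y‖ ≤ M := fun y hy => by simpa using hM hy
  have hd1nn : 0 ≤ d1 C x δ := by
    apply Real.sSup_nonneg
    rintro t ⟨l, y, hy, hl0, hlδ, rfl⟩
    apply div_nonneg _ hl0.le
    have h2 : (2:ℝ) ≤ ‖x + l • y‖ + ‖x - l • y‖ := by
      calc (2:ℝ) = ‖(x + l • y) + (x - l • y)‖ := by
            rw [show (x + l • y) + (x - l • y) = (2:ℝ) • x by module]
            rw [norm_smul, hx]; norm_num
        _ ≤ _ := norm_add_le _ _
    linarith
  have hBnn : 0 ≤ d1 C x δ + 2 * α / δ := by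
    have : (0:ℝ) ≤ 2 * α / δ := by positivity
    linarith
  have hbdd : BddAbove {t | ∃ l : ℝ, ∃ y ∈ C, 0 < l ∧ l < δ ∧
      t = (‖x + l • y‖ + ‖x - l • y‖ - 2) / l} := by
    refine ⟨2 * M, ?_⟩
    rintro t ⟨l, y, hy, hl0, hlδ, rfl⟩
    have h1 : ‖x + l • y‖ ≤ 1 + l * ‖y‖ := by
      calc ‖x + l • y‖ ≤ ‖x‖ + ‖l • y‖ := norm_add_le _ _
        _ = 1 + l * ‖y‖ := by rw [hx, norm_smul, Real.norm_of_nonneg hl0.le]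
    have h2 : ‖x - l • y‖ ≤ 1 + l * ‖y‖ := by
      calc ‖x - l • y‖ ≤ ‖x‖ + ‖l • y‖ := norm_sub_le _ _
        _ = 1 + l * ‖y‖ := by rw [hx, norm_smul, Real.norm_of_nonneg hl0.le]
    rw [div_le_iff₀ hl0]
    nlinarith [hMy y hy, norm_nonneg y]
  have key : ∀ f ∈ wslice x α, ∀ g ∈ wslice x α, ∀ y ∈ C,
      f y - g y ≤ d1 C x δ + 2 * α / δ := by
    rintro f ⟨hf1, hf2⟩ g ⟨hg1, hg2⟩ y hy
    have step : ∀ l : ℝ, 0 < l → l < δ → f y - g y ≤ d1 C x δ + 2 * α / l := by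
      intro l hl0 hlδ
      have hfb : f x + l * f y ≤ ‖x + l • y‖ := by
        have h2 : f (x + l • y) ≤ ‖f‖ * ‖x + l • y‖ :=
          le_trans (le_abs_self _) (f.le_opNorm _)
        have h3 : ‖f‖ * ‖x + l • y‖ ≤ 1 * ‖x + l • y‖ :=
          mul_le_mul_of_nonneg_right hf1 (norm_nonneg _)
        have h4 : f (x + l • y) = f x + l * f y := by
          rw [map_add, map_smul]; simp
        linarith
      have hgb : g x - l * g y ≤ ‖x - l • y‖ := by
        have h2 : g (x - l • y) ≤ ‖g‖ * ‖x - l • y‖ :=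
          le_trans (le_abs_self _) (g.le_opNorm _)
        have h3 : ‖g‖ * ‖x - l • y‖ ≤ 1 * ‖x - l • y‖ :=
          mul_le_mul_of_nonneg_right hg1 (norm_nonneg _)
        have h4 : g (x - l • y) = g x - l * g y := by
          rw [map_sub, map_smul]; simp
        linarith
      have hle : (‖x + l • y‖ + ‖x - l • y‖ - 2) / l ≤ d1 C x δ :=
        le_csSup hbdd ⟨l, y, hy, hl0, hlδ, rfl⟩
      have h5 : f y - g y ≤ ((‖x + l • y‖ + ‖x - l • y‖ - 2) + 2 * α) / l := by
        rw [le_div_iff₀ hl0]; nlinarith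
      calc f y - g y ≤ ((‖x + l • y‖ + ‖x - l • y‖ - 2) + 2 * α) / l := h5
        _ = (‖x + l • y‖ + ‖x - l • y‖ - 2) / l + 2 * α / l := add_div _ _ _
        _ ≤ d1 C x δ + 2 * α / l := by linarith
    have ht : Filter.Tendsto (fun l : ℝ => d1 C x δ + 2 * α / l) (nhdsWithin δ (Set.Iio δ))
        (nhds (d1 C x δ + 2 * α / δ)) := by
      apply Filter.Tendsto.mono_left _ nhdsWithin_le_nhds
      exact Filter.Tendsto.add tendsto_const_nhds
        (Filter.Tendsto.div tendsto_const_nhds Filter.tendsto_id hδ.ne')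
    refine ge_of_tendsto ht ?_
    have hmem : Set.Ioo (δ/2) δ ∈ nhdsWithin δ (Set.Iio δ) :=
      Ioo_mem_nhdsLT_of_mem ⟨by linarith, le_refl δ⟩
    filter_upwards [hmem] with l hl
    exact step l (by have := hl.1; linarith) hl.2
  show diamOn C (wslice x α) ≤ d1 C x δ + 2 * α / δ
  apply Real.sSup_le _ hBnn
  rintro t ⟨⟨f, g⟩, hfg, rfl⟩
  apply Real.sSup_le _ hBnn
  rintro s ⟨y, hy, rfl⟩
  simp only [ContinuousLinearMap.sub_apply]
  exact abs_le.mpr ⟨by linarith [key g hfg.2 f hfg.1 y hy], key f hfg.1 g hfg.2 y hy⟩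
end

section
/- Let X be a real Banach space, let 𝒞 be a compatible class of bounded subsets of X, and let f ∈ S(X*). Suppose that for every C ∈ 𝒞, every ε > 0, every C₁ ∈ 𝒞 and every η > 0, there exist x ∈ M_{ε,C}(X) and g ∈ D(x) with ‖f − g‖_{C₁} < η (that is, f lies in the τ-closure of D(M_{ε,C}(X)) for every C ∈ 𝒞 and ε > 0). Then f is a strong 𝒞-semidenting point of B(X*). -/
open Metric Set Pointwise

variable {X : Type*} [NormedAddCommGroup X] [NormedSpace ℝ X]

set_option maxHeartbeats 1600000 in
theorem stmt3 [CompleteSpace X] (𝒞 : Set (Set X)) (h𝒞 : IsCompatibleClass 𝒞)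
    (f : StrongDual ℝ X) (hf : ‖f‖ = 1)
    (h : ∀ C ∈ 𝒞, ∀ ε : ℝ, 0 < ε → ∀ C₁ ∈ 𝒞, ∀ η : ℝ, 0 < η →
      ∃ x ∈ MsetAll ε C, ∃ g ∈ dualD x, semiNormOn C₁ (f - g) < η) :
    IsStrongSemidenting 𝒞 f := by
  intro A hA ε hε
  -- a bound for A
  obtain ⟨R₀, hR₀⟩ := isBounded_iff_forall_norm_le.mp (h𝒞.bounded A hA)
  set R : ℝ := max R₀ 1 with hRdef
  have hR1 : (1 : ℝ) ≤ R := le_max_right _ _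
  have hRpos : (0 : ℝ) < R := lt_of_lt_of_le one_pos hR1
  have hRA : ∀ a ∈ A, ‖a‖ ≤ R := fun a ha => le_trans (hR₀ a ha) (le_max_left _ _)
  -- the set C
  set C : Set X := closure (absConvexHull ℝ (A ∪ {0})) with hCdef
  have hCmem : C ∈ 𝒞 := h𝒞.closedAbsConvexHull_mem _ (h𝒞.union_singleton_mem A hA 0)
  have hCconv : Convex ℝ C := (convex_absConvexHull).closure
  have hAC : A ⊆ C := fun a ha =>
    subset_closure (subset_absConvexHull (Or.inl ha))
  have h0C : (0 : X) ∈ C := subset_closure (subset_absConvexHull (Or.inr rfl))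
  -- apply the hypothesis
  have hε' : (0 : ℝ) < ε / (3 * R) := by positivity
  obtain ⟨x, hxM, g, hgD, hfg⟩ := h C hCmem (ε / (3 * R)) hε' A hA (ε / 3) (by positivity)
  obtain ⟨δ₀, hδ₀mem, hxmem⟩ := Set.mem_iUnion₂.mp hxM
  obtain ⟨hx1, hxsup⟩ := hxmem
  have hδ₀ : (0 : ℝ) < δ₀ := hδ₀mem
  obtain ⟨hg1, hgx⟩ := hgD
  -- choose λ and δ
  set l : ℝ := min 1 (δ₀ / (2 * R)) with hldef
  have hlpos : 0 < l := lt_min one_pos (by positivity)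
  have hl1 : l ≤ 1 := min_le_left _ _
  have hlR : l * R < δ₀ := by
    calc l * R ≤ (δ₀ / (2 * R)) * R := by
          exact mul_le_mul_of_nonneg_right (min_le_right _ _) hRpos.le
      _ = δ₀ / 2 := by field_simp
      _ < δ₀ := by linarith
  set δ : ℝ := min (l * ε / 3) (1 / 2) with hδdef
  have hδpos : 0 < δ := lt_min (by positivity) (by norm_num)
  have hδ1 : δ < 1 := lt_of_le_of_lt (min_le_right _ _) (by norm_num)
  refine ⟨x, hx1, δ, hδpos, hδ1, ?_⟩
  -- main estimate
  intro h' hh'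
  obtain ⟨hh'n, hh'x⟩ := hh'
  have hbdd : BddAbove {t | ∃ y ∈ C, 0 < ‖y‖ ∧ ‖y‖ < δ₀ ∧
      t = (‖x + y‖ + ‖x - y‖ - 2) / ‖y‖} := by
    refine ⟨2, ?_⟩
    rintro t ⟨y, _, hy0, hyδ, rfl⟩
    rw [div_le_iff₀ hy0]
    have h1 : ‖x + y‖ ≤ 1 + ‖y‖ := by simpa [hx1] using norm_add_le x y
    have h2 : ‖x - y‖ ≤ 1 + ‖y‖ := by simpa [hx1] using norm_sub_le x y
    linarith
  -- pointwise bound on |g a - h' a|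
  have key : ∀ a ∈ A, |g a - h' a| ≤ (ε / (3 * R)) * R + δ / l := by
    intro a ha
    rcases eq_or_ne a 0 with rfl | ha0
    · simp only [map_zero, sub_zero, abs_zero]
      positivity
    · set y : X := l • a with hydef
      have hyC : y ∈ C := by
        have := hCconv (hAC ha) h0C hlpos.le (by linarith : (0:ℝ) ≤ 1 - l) (by ring)
        simpa [hydef] using this
      have hany : ‖a‖ ≠ 0 := norm_ne_zero_iff.mpr ha0
      have hyn : ‖y‖ = l * ‖a‖ := by
        rw [hydef, norm_smul, Real.norm_eq_abs, abs_of_pos hlpos]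
      have hy0 : 0 < ‖y‖ := by
        rw [hyn]; exact mul_pos hlpos (norm_pos_iff.mpr ha0)
      have hyδ : ‖y‖ < δ₀ := by
        rw [hyn]
        calc l * ‖a‖ ≤ l * R := by
              exact mul_le_mul_of_nonneg_left (hRA a ha) hlpos.le
          _ < δ₀ := hlR
      have hmem : (‖x + y‖ + ‖x - y‖ - 2) / ‖y‖ ∈ {t | ∃ y ∈ C, 0 < ‖y‖ ∧ ‖y‖ < δ₀ ∧
          t = (‖x + y‖ + ‖x - y‖ - 2) / ‖y‖} := ⟨y, hyC, hy0, hyδ, rfl⟩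
      have hts : (‖x + y‖ + ‖x - y‖ - 2) / ‖y‖ < ε / (3 * R) :=
        lt_of_le_of_lt (le_csSup hbdd hmem) hxsup
      have hnum : ‖x + y‖ + ‖x - y‖ - 2 ≤ (ε / (3 * R)) * ‖y‖ :=
        le_of_lt ((div_lt_iff₀ hy0).mp hts)
      -- functional estimates
      have hgxy : g (x + y) ≤ ‖x + y‖ := by
        calc g (x + y) ≤ |g (x + y)| := le_abs_self _
          _ ≤ ‖g‖ * ‖x + y‖ := g.le_opNorm _
          _ = ‖x + y‖ := by rw [hg1, one_mul]
      have hgxy' : g (x - y) ≤ ‖x - y‖ := by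
        calc g (x - y) ≤ |g (x - y)| := le_abs_self _
          _ ≤ ‖g‖ * ‖x - y‖ := g.le_opNorm _
          _ = ‖x - y‖ := by rw [hg1, one_mul]
      have hhxy : h' (x + y) ≤ ‖x + y‖ := by
        calc h' (x + y) ≤ |h' (x + y)| := le_abs_self _
          _ ≤ ‖h'‖ * ‖x + y‖ := h'.le_opNorm _
          _ ≤ ‖x + y‖ := by
              exact mul_le_of_le_one_left (norm_nonneg _) hh'n
      have hhxy' : h' (x - y) ≤ ‖x - y‖ := by
        calc h' (x - y) ≤ |h' (x - y)| := le_abs_self _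
          _ ≤ ‖h'‖ * ‖x - y‖ := h'.le_opNorm _
          _ ≤ ‖x - y‖ := by
              exact mul_le_of_le_one_left (norm_nonneg _) hh'n
      have e1 : h' y ≤ ‖x + y‖ - 1 + δ := by
        have : h' (x + y) = h' x + h' y := by rw [map_add]
        linarith [this ▸ hhxy]
      have e2 : -(g y) ≤ ‖x - y‖ - 1 := by
        have : g (x - y) = g x - g y := by rw [map_sub]
        rw [this, hgx] at hgxy'; linarith
      have e3 : g y ≤ ‖x + y‖ - 1 := by
        have : g (x + y) = g x + g y := by rw [map_add]
        rw [this, hgx] at hgxy; linarith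
      have e4 : -(h' y) ≤ ‖x - y‖ - 1 + δ := by
        have : h' (x - y) = h' x - h' y := by rw [map_sub]
        linarith [this ▸ hhxy']
      have habs : |g y - h' y| ≤ (ε / (3 * R)) * ‖y‖ + δ := by
        rw [abs_le]
        constructor <;> nlinarith
      have hgy : g y = l * g a := by rw [hydef, map_smul, smul_eq_mul]
      have hhy : h' y = l * h' a := by rw [hydef, map_smul, smul_eq_mul]
      have habs2 : l * |g a - h' a| ≤ (ε / (3 * R)) * (l * ‖a‖) + δ := by
        calc l * |g a - h' a| = |l * (g a - h' a)| := by
              rw [abs_mul, abs_of_pos hlpos]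
          _ = |g y - h' y| := by rw [hgy, hhy]; ring_nf
          _ ≤ (ε / (3 * R)) * ‖y‖ + δ := habs
          _ = (ε / (3 * R)) * (l * ‖a‖) + δ := by rw [hyn]
      have hεR : (ε / (3 * R)) * ‖a‖ ≤ (ε / (3 * R)) * R :=
        mul_le_mul_of_nonneg_left (hRA a ha) hε'.le
      rw [← mul_le_mul_iff_right₀ hlpos]
      calc l * |g a - h' a| ≤ (ε / (3 * R)) * (l * ‖a‖) + δ := habs2
        _ = l * ((ε / (3 * R)) * ‖a‖) + δ := by ring
        _ ≤ l * ((ε / (3 * R)) * R) + l * (δ / l) := by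
            rw [mul_div_cancel₀ _ hlpos.ne']
            exact add_le_add (mul_le_mul_of_nonneg_left hεR hlpos.le) le_rfl
        _ = l * ((ε / (3 * R)) * R + δ / l) := by ring
  -- conclude
  have hfgR : ∀ a ∈ A, |(f - g) a| ≤ semiNormOn A (f - g) := by
    intro a ha
    refine le_csSup ⟨‖f - g‖ * R, ?_⟩ (Set.mem_image_of_mem _ ha)
    rintro t ⟨a', ha', rfl⟩
    calc |(f - g) a'| ≤ ‖f - g‖ * ‖a'‖ := (f - g).le_opNorm _
      _ ≤ ‖f - g‖ * R := mul_le_mul_of_nonneg_left (hRA a' ha') (norm_nonneg _)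
  have hεRval : (ε / (3 * R)) * R = ε / 3 := by field_simp
  have hδl : δ / l ≤ ε / 3 := by
    rw [div_le_iff₀ hlpos]
    calc δ ≤ l * ε / 3 := min_le_left _ _
      _ = ε / 3 * l := by ring
  show semiNormOn A (f - h') < ε
  have hsnonneg : 0 ≤ semiNormOn A (f - g) := by
    apply Real.sSup_nonneg
    rintro t ⟨a, _, rfl⟩
    exact abs_nonneg _
  apply lt_of_le_of_lt (b := semiNormOn A (f - g) + 2 * (ε / 3))
  · apply Real.sSup_le
    · rintro t ⟨a, ha, rfl⟩
      have h1 : |(f - h') a| ≤ |(f - g) a| + |g a - h' a| := by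
        have : (f - h') a = (f - g) a + (g a - h' a) := by
          simp only [ContinuousLinearMap.sub_apply]; ring
        rw [this]; exact abs_add_le _ _
      calc |(f - h') a| ≤ |(f - g) a| + |g a - h' a| := h1
        _ ≤ semiNormOn A (f - g) + ((ε / (3 * R)) * R + δ / l) :=
            add_le_add (hfgR a ha) (key a ha)
        _ ≤ semiNormOn A (f - g) + (ε / 3 + ε / 3) := by
            rw [hεRval]; linarith
        _ = semiNormOn A (f - g) + 2 * (ε / 3) := by ring
    · positivity
  · linarith
end

section
/- Let X be a real Banach space, let 𝒞 be a compatible class of bounded subsets of X, and let f ∈ S(X*) be a strong 𝒞-semidenting point of B(X*). Then for every β ≥ 0 and every closed convex C ∈ 𝒞 such that inf f(closure(C + βB(X))) > 0, there exists a closed ball B[x₀, r₀] in X containing C + βB(X) with 0 ∉ B[x₀, r₀]. -/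
open Metric Set Pointwise

variable {X : Type*} [NormedAddCommGroup X] [NormedSpace ℝ X]

theorem stmt4 [CompleteSpace X] (𝒞 : Set (Set X)) (h𝒞 : IsCompatibleClass 𝒞)
    (f : StrongDual ℝ X) (hf : ‖f‖ = 1)
    (h : IsStrongSemidenting 𝒞 f) :
    ∀ β : ℝ, 0 ≤ β → ∀ C ∈ 𝒞, IsClosed C → Convex ℝ C →
      0 < sInf (f '' closure (C + closedBall (0 : X) β)) →
      ∃ x₀ : X, ∃ r₀ : ℝ, C + closedBall (0 : X) β ⊆ closedBall x₀ r₀ ∧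
        (0 : X) ∉ closedBall x₀ r₀ := by
  intro β hβ C hC hCcl hCconv hm
  set D := closure (C + closedBall (0 : X) β) with hD
  set m := sInf (f '' D) with hmdef
  -- bound on C and on D
  obtain ⟨R, hR⟩ := isBounded_iff_forall_norm_le.mp (h𝒞.bounded C hC)
  set M : ℝ := max R 0 + β with hMdef
  have hM0 : 0 ≤ M := by
    have : (0:ℝ) ≤ max R 0 := le_max_right _ _
    linarith
  have hMC : ∀ c ∈ C, ‖c‖ ≤ M := fun c hc => by
    have := hR c hc
    have h2 : R ≤ max R 0 := le_max_left _ _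
    simp only [hMdef]; linarith
  have hMsum : ∀ y ∈ C + closedBall (0:X) β, ‖y‖ ≤ M := by
    rintro y ⟨c, hc, b, hb, rfl⟩
    have hb' : ‖b‖ ≤ β := mem_closedBall_zero_iff.mp hb
    calc ‖c + b‖ ≤ ‖c‖ + ‖b‖ := norm_add_le _ _
      _ ≤ max R 0 + β := add_le_add ((hR c hc).trans (le_max_left _ _)) hb'
  have hMD : ∀ z ∈ D, ‖z‖ ≤ M := by
    intro z hz
    have hsub : D ⊆ {z : X | ‖z‖ ≤ M} :=
      closure_minimal hMsum (isClosed_le continuous_norm continuous_const)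
    exact hsub hz
  have hBdd : BddBelow (f '' D) := by
    refine ⟨-M, ?_⟩
    rintro _ ⟨z, hz, rfl⟩
    have h1 : ‖f z‖ ≤ ‖f‖ * ‖z‖ := f.le_opNorm z
    rw [hf, one_mul, Real.norm_eq_abs] at h1
    have := hMD z hz
    have := neg_abs_le (f z)
    linarith
  have hlow : ∀ z ∈ D, m ≤ f z := fun z hz => csInf_le hBdd ⟨z, hz, rfl⟩
  -- on C, f ≥ m + β
  have hfc : ∀ c ∈ C, m + β ≤ f c := by
    intro c hc
    refine le_of_forall_pos_le_add fun ε' hε' => ?_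
    set η := min (ε'/(β+1)) (1/2) with hηdef
    have hη0 : 0 < η := lt_min (by positivity) (by norm_num)
    have hηδ : 1 - η < ‖f‖ := by rw [hf]; linarith
    obtain ⟨z, hz1, hz2⟩ := f.exists_lt_apply_of_lt_opNorm hηδ
    set u := if 0 ≤ f z then z else -z with hudef
    have hu1 : ‖u‖ ≤ 1 := by
      rw [hudef]; split_ifs <;> simpa using hz1.le
    have hu2 : 1 - η < f u := by
      rw [Real.norm_eq_abs] at hz2
      rw [hudef]; split_ifs with hfz
      · rwa [abs_of_nonneg hfz] at hz2
      · rw [map_neg]; rwa [abs_of_neg (lt_of_not_ge hfz), ] at hz2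
    have hymem : c + (-β) • u ∈ C + closedBall (0:X) β := by
      refine ⟨c, hc, (-β) • u, ?_, rfl⟩
      rw [mem_closedBall_zero_iff, norm_smul, Real.norm_eq_abs, abs_neg, abs_of_nonneg hβ]
      calc β * ‖u‖ ≤ β * 1 := by
            exact mul_le_mul_of_nonneg_left hu1 hβ
        _ = β := mul_one β
    have hml := hlow _ (subset_closure hymem)
    have hfval : f (c + (-β) • u) = f c - β * f u := by
      rw [map_add, map_smul]; simp; ring
    rw [hfval] at hml
    have hηε : η ≤ ε'/(β+1) := min_le_left _ _
    have hβ1 : (0:ℝ) < β + 1 := by linarith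
    have key : β * η ≤ ε' := by
      have h1 : β * η ≤ β * (ε'/(β+1)) := mul_le_mul_of_nonneg_left hηε hβ
      have h2 : β * (ε'/(β+1)) ≤ (β+1) * (ε'/(β+1)) := by
        apply mul_le_mul_of_nonneg_right (by linarith) (by positivity)
      have h3 : (β+1) * (ε'/(β+1)) = ε' := by field_simp
      linarith
    nlinarith [mul_le_mul_of_nonneg_left hu2.le hβ]
  -- semidenting
  obtain ⟨x, hx, δ, hδ0, hδ1, hslice⟩ := h C hC (m/2) (by linarith)
  set n := max (m/4) ((m/4 + M)/δ + 1) with hndef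
  have hn1 : m/4 ≤ n := le_max_left _ _
  have hn2 : (m/4 + M)/δ + 1 ≤ n := le_max_right _ _
  have hn0 : 0 < n := lt_of_lt_of_le (by positivity) hn2
  have hnδ : m/4 + M < δ * n := by
    have h1 : δ * ((m/4 + M)/δ + 1) ≤ δ * n := mul_le_mul_of_nonneg_left hn2 hδ0.le
    have h2 : δ * ((m/4 + M)/δ + 1) = (m/4 + M) + δ := by field_simp
    linarith
  refine ⟨n • x, n - m/4, ?_, ?_⟩
  · intro y hy
    rw [mem_closedBall, dist_eq_norm]
    by_contra hgt
    push_neg at hgt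
    rw [← norm_sub_rev] at hgt
    obtain ⟨c, hc, b, hb, rfl⟩ := hy
    set y := c + b with hydef
    have hyM : ‖y‖ ≤ M := hMsum y ⟨c, hc, b, hb, rfl⟩
    have hne : n • x - y ≠ 0 := by
      intro h0
      rw [h0, norm_zero] at hgt
      linarith
    obtain ⟨g, hg1, hg2⟩ := exists_dual_vector ℝ (n • x - y) (norm_ne_zero_iff.mpr hne)
    have hg2' : g (n • x - y) = ‖n • x - y‖ := by exact_mod_cast hg2
    have hgy : |g y| ≤ M := by
      have h1 : ‖g y‖ ≤ ‖g‖ * ‖y‖ := g.le_opNorm y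
      rw [hg1, one_mul, Real.norm_eq_abs] at h1
      linarith
    have hgx1 : g x ≤ 1 := by
      have h1 : ‖g x‖ ≤ ‖g‖ * ‖x‖ := g.le_opNorm x
      rw [hg1, one_mul, hx, Real.norm_eq_abs] at h1
      linarith [le_abs_self (g x)]
    have hgval : n * g x - g y = ‖n • x - y‖ := by
      rw [← hg2', map_sub, map_smul]; simp
    have hgxδ : 1 - δ < g x := by
      have h1 : n - m/4 - M < n * g x := by
        have := abs_le.mp hgy
        linarith
      have h2 : n * (1 - δ) < n * g x := by
        have : n * (1 - δ) = n - δ * n := by ring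
        linarith
      exact lt_of_mul_lt_mul_left (by linarith [h2]) hn0.le
    have hgmem : g ∈ wslice x δ := ⟨hg1.le, hgxδ⟩
    have hsemi : semiNormOn C (f - g) < m/2 := hslice hgmem
    have hBddC : BddAbove ((fun z => |(f - g) z|) '' C) := by
      refine ⟨2 * M, ?_⟩
      rintro _ ⟨z, hz, rfl⟩
      have h1 : ‖(f - g) z‖ ≤ ‖f - g‖ * ‖z‖ := (f - g).le_opNorm z
      have h2 : ‖f - g‖ ≤ 2 := by
        calc ‖f - g‖ ≤ ‖f‖ + ‖g‖ := norm_sub_le _ _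
          _ = 2 := by rw [hf, hg1]; norm_num
      rw [Real.norm_eq_abs] at h1
      have h3 : ‖f - g‖ * ‖z‖ ≤ 2 * M :=
        mul_le_mul h2 (hMC z hz) (norm_nonneg z) (by norm_num)
      simpa using h1.trans h3
    have hfgc : |f c - g c| < m/2 := by
      have h1 : |(f - g) c| ≤ semiNormOn C (f - g) :=
        le_csSup hBddC ⟨c, hc, rfl⟩
      simp only [ContinuousLinearMap.sub_apply] at h1
      linarith
    have hgb : |g b| ≤ β := by
      have h1 : ‖g b‖ ≤ ‖g‖ * ‖b‖ := g.le_opNorm b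
      rw [hg1, one_mul, Real.norm_eq_abs] at h1
      linarith [mem_closedBall_zero_iff.mp hb]
    have hgysum : g y = g c + g b := map_add g c b
    have hfcm : m + β ≤ f c := hfc c hc
    have h5 := abs_lt.mp hfgc
    have h6 := abs_le.mp hgb
    -- g y > m/2 and g y < m/4
    nlinarith [hgt, hgval, hgx1, hn0, hm]
  · rw [mem_closedBall, dist_eq_norm, zero_sub, norm_neg, norm_smul, hx,
      Real.norm_eq_abs, abs_of_pos hn0, mul_one]
    push_neg
    linarith
end

section
/- Let X be a real Banach space, let 𝒞 be a compatible class of bounded subsets of X, and let f ∈ S(X*). Suppose that for every β ≥ 0 and every closed convex C ∈ 𝒞 with inf f(closure(C + βB(X))) > 0, there exists a closed ball B[x₀, r₀] in X containing C + βB(X) with 0 ∉ B[x₀, r₀]. Then f is a strong 𝒞-semidenting point of B(X*). -/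
open Metric Set Pointwise

variable {X : Type*} [NormedAddCommGroup X] [NormedSpace ℝ X]

lemma absconv_comb_mem {S : Set X} (hbal : Balanced ℝ S) (hconv : Convex ℝ S)
    {a u : X} (ha : a ∈ S) (hu : u ∈ S) {c₁ c₂ : ℝ} (habs : |c₁| + |c₂| ≤ 1) :
    c₁ • a + c₂ • u ∈ S := by
  have hzero : (0 : X) ∈ S := by
    have := hbal 0 (by simp)
    exact this ⟨a, ha, zero_smul ℝ a⟩
  set c := |c₁| + |c₂| with hc
  rcases eq_or_lt_of_le (by positivity : (0:ℝ) ≤ c) with h0 | h0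
  · have h1 : c₁ = 0 := by
      have h2 := abs_nonneg c₁; have h3 := abs_nonneg c₂
      have : |c₁| = 0 := by rw [hc] at h0; linarith
      exact abs_eq_zero.mp this
    have h2 : c₂ = 0 := by
      have h2 := abs_nonneg c₁; have h3 := abs_nonneg c₂
      have : |c₂| = 0 := by rw [hc] at h0; linarith
      exact abs_eq_zero.mp this
    simpa [h1, h2] using hzero
  · set a₁ : X := if 0 ≤ c₁ then a else -a with ha₁
    set u₁ : X := if 0 ≤ c₂ then u else -u with hu₁
    have hna : -a ∈ S := by
      have := hbal (-1) (by simp)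
      exact this ⟨a, ha, by simp⟩
    have hnu : -u ∈ S := by
      have := hbal (-1) (by simp)
      exact this ⟨u, hu, by simp⟩
    have ha₁S : a₁ ∈ S := by rw [ha₁]; split_ifs <;> assumption
    have hu₁S : u₁ ∈ S := by rw [hu₁]; split_ifs <;> assumption
    have hca : c₁ • a = |c₁| • a₁ := by
      rw [ha₁]; split_ifs with h
      · rw [abs_of_nonneg h]
      · rw [abs_of_neg (not_le.mp h)]; simp
    have hcu : c₂ • u = |c₂| • u₁ := by
      rw [hu₁]; split_ifs with h
      · rw [abs_of_nonneg h]
      · rw [abs_of_neg (not_le.mp h)]; simp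
    have hp : (|c₁|/c) • a₁ + (|c₂|/c) • u₁ ∈ S :=
      hconv ha₁S hu₁S (by positivity) (by positivity) (by field_simp; exact hc.symm)
    have hcs : c • ((|c₁|/c) • a₁ + (|c₂|/c) • u₁) ∈ S := by
      have := hbal c (by rw [Real.norm_eq_abs, abs_of_pos h0]; exact habs)
      exact this ⟨_, hp, rfl⟩
    have : c • ((|c₁|/c) • a₁ + (|c₂|/c) • u₁) = c₁ • a + c₂ • u := by
      rw [smul_add, smul_smul, smul_smul, mul_div_cancel₀ _ h0.ne',
        mul_div_cancel₀ _ h0.ne', hca, hcu]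
    rwa [this] at hcs

set_option maxHeartbeats 1000000 in
theorem stmt5 [CompleteSpace X] (𝒞 : Set (Set X)) (h𝒞 : IsCompatibleClass 𝒞)
    (f : StrongDual ℝ X) (hf : ‖f‖ = 1)
    (h : ∀ β : ℝ, 0 ≤ β → ∀ C ∈ 𝒞, IsClosed C → Convex ℝ C →
      0 < sInf (f '' closure (C + closedBall (0 : X) β)) →
      ∃ x₀ : X, ∃ r₀ : ℝ, C + closedBall (0 : X) β ⊆ closedBall x₀ r₀ ∧
        (0 : X) ∉ closedBall x₀ r₀) :
    IsStrongSemidenting 𝒞 f := by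
  intro A hA ε hε
  -- bound on A
  obtain ⟨M', hM'⟩ := (h𝒞.bounded A hA).subset_closedBall 0
  set M : ℝ := max M' 1 with hMdef
  have hM1 : (1:ℝ) ≤ M := le_max_right _ _
  have hMA : ∀ a ∈ A, ‖a‖ ≤ M := fun a ha => by
    have := hM' ha
    rw [mem_closedBall, dist_zero_right] at this
    exact this.trans (le_max_left _ _)
  clear_value M
  have hM0 : (0:ℝ) < M := lt_of_lt_of_le one_pos hM1
  -- parameters
  set T : ℝ := 12*M/ε + 2 with hTdef
  clear_value T
  have hT2 : (2:ℝ) ≤ T := by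
    rw [hTdef]
    have : 0 ≤ 12*M/ε := by positivity
    linarith
  have hT0 : (0:ℝ) < T := by linarith
  set σ : ℝ := 1/(2*T) with hσdef
  clear_value σ
  have hσ0 : 0 < σ := by rw [hσdef]; positivity
  have hσ4 : σ ≤ 1/4 := by
    rw [hσdef, div_le_div_iff₀ (by linarith) (by norm_num)]
    linarith
  have hTσ : T * σ = 1/2 := by
    rw [hσdef]; field_simp
  -- choose u
  obtain ⟨u, hu1, hu2⟩ : ∃ u : X, ‖u‖ ≤ 1 ∧ 1 - σ < f u := by
    obtain ⟨x, hx1, hx2⟩ := f.exists_lt_apply_of_lt_opNorm (r := 1 - σ) (by rw [hf]; linarith)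
    rcases le_or_gt 0 (f x) with hfx | hfx
    · exact ⟨x, hx1.le, by rwa [Real.norm_eq_abs, abs_of_nonneg hfx] at hx2⟩
    · refine ⟨-x, by simpa using hx1.le, ?_⟩
      rw [Real.norm_eq_abs, abs_of_neg hfx] at hx2
      simpa using hx2
  have hfu1 : f u ≤ 1 := by
    calc f u ≤ |f u| := le_abs_self _
    _ ≤ ‖f‖ * ‖u‖ := f.le_opNorm u
    _ ≤ 1 := by rw [hf]; simpa using hu1
  have hfuh : (1:ℝ)/2 ≤ f u := by linarith
  have hfu0 : (0:ℝ) < f u := by linarith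
  have hune : u ≠ 0 := by
    intro hu0; rw [hu0, map_zero] at hfu0; exact lt_irrefl _ hfu0
  -- the sets
  set W : Set X := closure (absConvexHull ℝ (A ∪ {u})) with hWdef
  have hW𝒞 : W ∈ 𝒞 := h𝒞.closedAbsConvexHull_mem _ (h𝒞.union_singleton_mem A hA u)
  have hWclosed : IsClosed W := isClosed_closure
  have hWconvex : Convex ℝ W := (convex_absConvexHull (𝕜 := ℝ)).closure
  have hWbal : Balanced ℝ W := (balanced_absConvexHull (𝕜 := ℝ)).closure
  set K0 : Set X := W ∩ {y | f y = 0} with hK0def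
  have hK0𝒞 : K0 ∈ 𝒞 := h𝒞.subset_mem W hW𝒞 K0 inter_subset_left
  have hK0closed : IsClosed K0 :=
    hWclosed.inter (isClosed_eq f.continuous continuous_const)
  have hK0convex : Convex ℝ K0 :=
    hWconvex.inter (convex_hyperplane (IsLinearMap.mk f.map_add f.map_smul) 0)
  have hK0sym : ∀ k ∈ K0, -k ∈ K0 := by
    intro k hk
    refine ⟨?_, by simpa using hk.2⟩
    have := hWbal (-1) (by simp)
    exact this ⟨k, hk.1, by simp⟩
  have h0K0 : (0:X) ∈ K0 := by
    constructor
    · apply subset_closure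
      have hmem : u ∈ absConvexHull ℝ (A ∪ {u}) :=
        subset_absConvexHull (Or.inr rfl)
      have := balanced_absConvexHull (𝕜 := ℝ) (s := A ∪ {u}) 0 (by simp)
      exact this ⟨u, hmem, zero_smul ℝ u⟩
    · simp
  set γ : ℝ := 8*(1+2*M)/ε with hγdef
  clear_value γ
  have hγ0 : (0:ℝ) < γ := by rw [hγdef]; positivity
  set C : Set X := (fun y => γ • y + T • u) '' K0 with hCdef
  have hC𝒞 : C ∈ 𝒞 := h𝒞.smul_add_mem K0 hK0𝒞 γ (T • u)
  have hCclosed : IsClosed C := by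
    have h1 : IsClosedMap (fun y : X => γ • y) :=
      (Homeomorph.smulOfNeZero γ hγ0.ne').isClosedMap
    have h2 : IsClosedMap (fun y : X => y + T • u) :=
      (Homeomorph.addRight (T • u)).isClosedMap
    exact (h2.comp h1) K0 hK0closed
  have hCconvex : Convex ℝ C := by
    rintro p ⟨k1, hk1, rfl⟩ q ⟨k2, hk2, rfl⟩ a b ha hb hab
    refine ⟨a • k1 + b • k2, hK0convex hk1 hk2 ha hb hab, ?_⟩
    have heq : a • (γ • k1 + T • u) + b • (γ • k2 + T • u)
        = γ • (a • k1 + b • k2) + (a+b) • (T • u) := by module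
    rw [heq, hab, one_smul]
  set β : ℝ := T * f u - 1 with hβdef
  clear_value β
  have hβ0 : 0 ≤ β := by
    rw [hβdef]
    have := mul_le_mul hT2 hfuh (by norm_num) hT0.le
    linarith
  -- values of f on C
  have hfC : ∀ c ∈ C, f c = T * f u := by
    rintro c ⟨k, hk, rfl⟩
    have hk0 : f k = 0 := hk.2
    simp [map_add, map_smul, hk0, smul_eq_mul]
  -- positivity of the inf
  have hTuC : T • u ∈ C := ⟨0, h0K0, by simp⟩
  have hpos : 0 < sInf (f '' closure (C + closedBall (0:X) β)) := by
    have hsub1 : closure (C + closedBall (0:X) β) ⊆ {z | 1 ≤ f z} := by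
      apply closure_minimal _ (isClosed_le continuous_const f.continuous)
      intro z hz
      rw [Set.mem_add] at hz
      obtain ⟨c, hc, b, hb, rfl⟩ := hz
      have h1 : f c = T * f u := hfC c hc
      have h2 : |f b| ≤ β := by
        calc |f b| ≤ ‖f‖ * ‖b‖ := f.le_opNorm b
        _ ≤ β := by
            rw [hf, one_mul]
            rwa [mem_closedBall, dist_zero_right] at hb
      have h3 := abs_le.mp h2
      rw [hβdef] at h3
      simp only [map_add, mem_setOf_eq, h1]
      linarith [h3.1]
    have hne : (f '' closure (C + closedBall (0:X) β)).Nonempty := by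
      refine ⟨f (T • u + 0), mem_image_of_mem f (subset_closure ?_)⟩
      exact add_mem_add hTuC (mem_closedBall_self hβ0)
    have h1 : (1:ℝ) ≤ sInf (f '' closure (C + closedBall (0:X) β)) := by
      apply le_csInf hne
      rintro b ⟨z, hz, rfl⟩
      exact hsub1 hz
    linarith
  have hmemC : ∀ k ∈ K0, γ • k + T • u ∈ C := fun k hk => ⟨k, hk, rfl⟩
  have hWsub : absConvexHull ℝ (A ∪ {u}) ⊆ W := subset_closure
  have hK0mem : ∀ y : X, y ∈ W → f y = 0 → y ∈ K0 := fun y h1 h2 => ⟨h1, h2⟩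
  clear_value W K0 C
  obtain ⟨x₀, r₀, hsub, h0B⟩ := h β hβ0 C hC𝒞 hCclosed hCconvex hpos
  -- basic facts about the ball
  have hr₀x : r₀ < ‖x₀‖ := by
    by_contra hcon
    push_neg at hcon
    exact h0B (by rw [mem_closedBall, dist_zero_left]; exact hcon)
  have hr₀0 : 0 ≤ r₀ := by
    have := hsub (add_mem_add hTuC (mem_closedBall_self hβ0))
    rw [mem_closedBall] at this
    exact le_trans dist_nonneg this
  have hx₀0 : 0 < ‖x₀‖ := lt_of_le_of_lt hr₀0 hr₀x
  -- quantitative inclusion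
  have hkey : ∀ c ∈ C, ‖c - x₀‖ + β ≤ r₀ := by
    intro c hc
    by_cases hcx : c = x₀
    · subst hcx
      simp only [sub_self, norm_zero, zero_add]
      have hvn : ‖(‖u‖⁻¹ • u : X)‖ = 1 := by
        rw [norm_smul, norm_inv, norm_norm,
          inv_mul_cancel₀ (norm_ne_zero_iff.mpr hune)]
      have hmem : c + β • (‖u‖⁻¹ • u) ∈ C + closedBall (0:X) β := by
        apply add_mem_add hc
        rw [mem_closedBall, dist_zero_right, norm_smul, Real.norm_eq_abs,
          abs_of_nonneg hβ0, hvn, mul_one]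
      have hle := hsub hmem
      rw [mem_closedBall, dist_eq_norm] at hle
      calc β = ‖β • (‖u‖⁻¹ • u : X)‖ := by
              rw [norm_smul, Real.norm_eq_abs, abs_of_nonneg hβ0, hvn, mul_one]
      _ = ‖c + β • (‖u‖⁻¹ • u) - c‖ := by congr 1; abel
      _ ≤ r₀ := hle
    · have hn0 : 0 < ‖c - x₀‖ := by
        rw [norm_pos_iff]
        exact sub_ne_zero.mpr hcx
      have hmem : c + β • (‖c - x₀‖⁻¹ • (c - x₀)) ∈ C + closedBall (0:X) β := by
        apply add_mem_add hc
        rw [mem_closedBall, dist_zero_right, norm_smul, norm_smul, Real.norm_eq_abs,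
          Real.norm_eq_abs, abs_of_nonneg hβ0, abs_of_nonneg (inv_nonneg.mpr hn0.le),
          inv_mul_cancel₀ hn0.ne', mul_one]
      have hle := hsub hmem
      rw [mem_closedBall, dist_eq_norm] at hle
      have heq : c + β • (‖c - x₀‖⁻¹ • (c - x₀)) - x₀
          = (1 + β * ‖c - x₀‖⁻¹) • (c - x₀) := by
        rw [smul_smul, add_smul, one_smul]; abel
      rw [heq, norm_smul, Real.norm_eq_abs,
        abs_of_nonneg (by positivity : (0:ℝ) ≤ 1 + β * ‖c - x₀‖⁻¹)] at hle
      have hmul : (1 + β * ‖c - x₀‖⁻¹) * ‖c - x₀‖ = ‖c - x₀‖ + β := by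
        field_simp
      rw [hmul] at hle
      exact hle
  -- define slice data
  refine ⟨‖x₀‖⁻¹ • x₀, ?_, min (1/2) (1/(2*‖x₀‖)), ?_, ?_, ?_⟩
  · rw [norm_smul, norm_inv, norm_norm, inv_mul_cancel₀ hx₀0.ne']
  · exact lt_min (by norm_num) (by positivity)
  · calc min (1/2) (1/(2*‖x₀‖)) ≤ 1/2 := min_le_left _ _
    _ < 1 := by norm_num
  · -- the main inclusion
    intro g hg
    have hg1 : ‖g‖ ≤ 1 := hg.1
    have hg2 : 1 - min (1/2) (1/(2*‖x₀‖)) < g (‖x₀‖⁻¹ • x₀) := hg.2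
    set δ : ℝ := min (1/2) (1/(2*‖x₀‖)) with hδdef
    have hδ2 : δ ≤ 1/(2*‖x₀‖) := min_le_right _ _
    clear_value δ
    have hδx : δ * ‖x₀‖ ≤ 1/2 := by
      calc δ * ‖x₀‖ ≤ (1/(2*‖x₀‖)) * ‖x₀‖ :=
            mul_le_mul_of_nonneg_right hδ2 hx₀0.le
      _ = 1/2 := by field_simp
    have hgx₀ : (1-δ) * ‖x₀‖ < g x₀ := by
      have heq : g (‖x₀‖⁻¹ • x₀) = ‖x₀‖⁻¹ * g x₀ := by
        rw [map_smul, smul_eq_mul]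
      rw [heq] at hg2
      have := mul_lt_mul_of_pos_left hg2 hx₀0
      rwa [mul_comm (‖x₀‖) (1-δ), ← mul_assoc,
        mul_inv_cancel₀ hx₀0.ne', one_mul] at this
    -- lower bound for g on C
    have hgC : ∀ c ∈ C, β - 1/2 < g c := by
      intro c hc
      have h1 : g x₀ - g c ≤ r₀ - β := by
        have h2 : g (x₀ - c) ≤ ‖x₀ - c‖ := by
          calc g (x₀ - c) ≤ |g (x₀ - c)| := le_abs_self _
          _ ≤ ‖g‖ * ‖x₀ - c‖ := g.le_opNorm _
          _ ≤ 1 * ‖x₀ - c‖ := mul_le_mul_of_nonneg_right hg1 (norm_nonneg _)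
          _ = ‖x₀ - c‖ := one_mul _
        rw [map_sub] at h2
        have h3 : ‖x₀ - c‖ ≤ r₀ - β := by
          rw [norm_sub_rev]
          linarith [hkey c hc]
        linarith
      have hexp : (1-δ)*‖x₀‖ = ‖x₀‖ - δ*‖x₀‖ := by ring
      rw [hexp] at hgx₀
      linarith
    -- the slice inequalities
    have hgC' : ∀ k ∈ K0, T * f u - 3/2 < γ * g k + T * g u := by
      intro k hk
      have hcm : γ • k + T • u ∈ C := hmemC k hk
      have := hgC _ hcm
      rw [map_add, map_smul, map_smul, smul_eq_mul, smul_eq_mul, hβdef] at this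
      linarith
    have hgu1 : g u ≤ 1 := by
      calc g u ≤ |g u| := le_abs_self _
      _ ≤ ‖g‖ * ‖u‖ := g.le_opNorm u
      _ ≤ 1 * 1 := mul_le_mul hg1 hu1 (norm_nonneg _) zero_le_one
      _ = 1 := one_mul 1
    have hguT : T * f u - 3/2 < T * g u := by
      have := hgC' 0 h0K0
      simpa using this
    have hgk : ∀ k ∈ K0, |g k| ≤ 2/γ := by
      intro k hk
      have h1 := hgC' k hk
      have h2 := hgC' (-k) (hK0sym k hk)
      rw [map_neg] at h2
      have h3 : T * (g u - f u) ≤ T * σ := by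
        apply mul_le_mul_of_nonneg_left _ hT0.le
        linarith
      rw [hTσ] at h3
      have h4 : |γ * g k| ≤ 2 := by
        rw [abs_le]
        constructor <;> nlinarith
      rw [abs_mul, abs_of_pos hγ0] at h4
      rw [le_div_iff₀ hγ0]
      linarith
    have hfgu : |f u - g u| ≤ 3/(2*T) := by
      rw [abs_le]
      constructor
      · have h1 : g u - f u ≤ σ := by linarith
        have h2 : σ ≤ 3/(2*T) := by
          rw [hσdef]
          gcongr
          norm_num
        linarith
      · have h5 : T * (f u - g u) ≤ 3/2 := by linarith
        rw [le_div_iff₀ (by positivity : (0:ℝ) < 2*T)]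
        nlinarith
    -- estimate |f a - g a| for a in A
    have hfinal : ∀ a ∈ A, |f a - g a| ≤ ε/2 := by
      intro a ha
      set t : ℝ := f a / f u with htdef
      clear_value t
      have hfa : |f a| ≤ M := by
        calc |f a| ≤ ‖f‖ * ‖a‖ := f.le_opNorm a
        _ = ‖a‖ := by rw [hf, one_mul]
        _ ≤ M := hMA a ha
      have ht : |t| ≤ 2*M := by
        rw [htdef, abs_div, abs_of_pos hfu0, div_le_iff₀ hfu0]
        nlinarith [abs_nonneg (f a)]
      have h1pM : (0:ℝ) < 1 + 2*M := by linarith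
      set w : X := (1+2*M)⁻¹ • (a - t • u) with hwdef
      have hwW : w ∈ W := by
        apply hWsub
        have heq : w = (1+2*M)⁻¹ • a + (-t * (1+2*M)⁻¹) • u := by
          rw [hwdef]; module
        rw [heq]
        refine absconv_comb_mem (balanced_absConvexHull (𝕜 := ℝ) (s := A ∪ {u}))
          (convex_absConvexHull (𝕜 := ℝ) (s := A ∪ {u}))
          (subset_absConvexHull (Or.inl ha)) (subset_absConvexHull (Or.inr rfl)) ?_
        have habs1 : |(1+2*M)⁻¹| = (1+2*M)⁻¹ := abs_of_pos (by positivity)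
        have habs2 : |(-t * (1+2*M)⁻¹)| = |t| * (1+2*M)⁻¹ := by
          rw [abs_mul, abs_neg, abs_of_pos (by positivity : (0:ℝ) < (1+2*M)⁻¹)]
        rw [habs1, habs2]
        have hinvpos : 0 < (1+2*M)⁻¹ := by positivity
        nlinarith [mul_nonneg (by linarith : (0:ℝ) ≤ 2*M - |t|) hinvpos.le,
          mul_inv_cancel₀ h1pM.ne']
      have hfw : f w = 0 := by
        rw [hwdef, map_smul, smul_eq_mul, map_sub, map_smul, smul_eq_mul, htdef,
          div_mul_cancel₀ _ hfu0.ne', sub_self, mul_zero]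
      have hgw : |g w| ≤ 2/γ := hgk w (hK0mem w hwW hfw)
      have hatu : a - t • u = (1+2*M) • w := by
        rw [hwdef, smul_inv_smul₀ h1pM.ne']
      have hfa_eq : f a = t * f u := by
        rw [htdef, div_mul_cancel₀ _ hfu0.ne']
      have hgatu : |g (a - t • u)| ≤ ε/4 := by
        rw [hatu, map_smul, smul_eq_mul, abs_mul, abs_of_pos h1pM]
        have h6 : (1+2*M) * |g w| ≤ (1+2*M) * (2/γ) :=
          mul_le_mul_of_nonneg_left hgw h1pM.le
        have h7 : (1+2*M) * (2/γ) = ε/4 := by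
          rw [hγdef]; field_simp; ring
        linarith
      have hsplit : f a - g a = t * (f u - g u) - g (a - t • u) := by
        have h8 : g (a - t • u) = g a - t * g u := by
          rw [map_sub, map_smul, smul_eq_mul]
        rw [h8, hfa_eq]; ring
      have h9 : |t * (f u - g u)| ≤ 2*M * (3/(2*T)) := by
        rw [abs_mul]
        apply mul_le_mul ht hfgu (abs_nonneg _) (by linarith)
      have h10 : 2*M * (3/(2*T)) ≤ ε/4 := by
        have h11 : ε/4 * T = 3*M + ε/2 := by
          rw [hTdef]; field_simp; ring
        rw [div_eq_mul_inv, ← mul_assoc]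
        rw [show 2*M*3 = 6*M by ring]
        rw [← div_eq_mul_inv, div_le_iff₀ (by positivity : (0:ℝ) < 2*T)]
        nlinarith
      calc |f a - g a| = |t * (f u - g u) - g (a - t • u)| := by rw [hsplit]
      _ ≤ |t * (f u - g u)| + |g (a - t • u)| := abs_sub _ _
      _ ≤ 2*M * (3/(2*T)) + ε/4 := add_le_add h9 hgatu
      _ ≤ ε/4 + ε/4 := by linarith
      _ = ε/2 := by ring
    show semiNormOn A (f - g) < ε
    have hle : semiNormOn A (f - g) ≤ ε/2 := by
      apply Real.sSup_le
      · rintro y ⟨a, ha, rfl⟩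
        simp only [ContinuousLinearMap.sub_apply]
        exact hfinal a ha
      · positivity
    linarith
end

section
/- Let X be a real Banach space, let 𝒞 be a compatible class of bounded subsets of X, and let f ∈ S(X*) be a strong 𝒞-semidenting point of B(X*). Then for every ε > 0 and every C ∈ 𝒞, there exist δ > 0 and x ∈ S(X) such that D(S(X) ∩ B(x, δ)) ⊆ B_C(f, ε). -/
open Metric Set Pointwise

variable {X : Type*} [NormedAddCommGroup X] [NormedSpace ℝ X]

theorem stmt6 [CompleteSpace X] (𝒞 : Set (Set X)) (h𝒞 : IsCompatibleClass 𝒞)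
    (f : StrongDual ℝ X) (hf : ‖f‖ = 1)
    (h : IsStrongSemidenting 𝒞 f) :
    ∀ ε : ℝ, 0 < ε → ∀ C ∈ 𝒞, ∃ δ : ℝ, 0 < δ ∧ ∃ x : X, ‖x‖ = 1 ∧
      dualDSet ({y | ‖y‖ = 1} ∩ ball x δ) ⊆ ballOn C f ε := by
  intro ε hε C hC
  obtain ⟨x, hx, δ, hδ, hδ1, hsub⟩ := h C hC ε hε
  refine ⟨δ, hδ, x, hx, fun g hg => ?_⟩
  apply hsub
  simp only [dualDSet, mem_iUnion] at hg
  obtain ⟨y, ⟨hy1, hy2⟩, hgy, hgx⟩ := hg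
  refine ⟨le_of_eq hgy, ?_⟩
  have h1 : g x = g y + g (x - y) := by rw [map_sub]; ring
  have h2 : |g (x - y)| ≤ ‖x - y‖ := by
    calc |g (x - y)| ≤ ‖g‖ * ‖x - y‖ := g.le_opNorm _
    _ = ‖x - y‖ := by rw [hgy, one_mul]
  have h3 : ‖x - y‖ < δ := by rwa [← dist_eq_norm, dist_comm, ← mem_ball]
  rw [h1, hgx]
  have := abs_le.mp h2
  linarith
end

section
/- Let X be a real Banach space and let 𝒞 be a compatible class of bounded subsets of X. If the duality map on X is norm-τ quasicontinuous, then for every norm-dense subset A ⊆ S(X) and every support mapping φ : S(X) → S(X*), the set φ(A) is τ-dense in S(X*), i.e., for every f ∈ S(X*), every C ∈ 𝒞 and every ε > 0 there exists x₀ ∈ A with ‖f − φ(x₀)‖_C < ε. -/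
open Metric Set Pointwise

variable {X : Type*} [NormedAddCommGroup X] [NormedSpace ℝ X]

theorem stmt10 [CompleteSpace X] (𝒞 : Set (Set X)) (h𝒞 : IsCompatibleClass 𝒞)
    (h : DualityMapQuasicontinuous 𝒞) :
    ∀ A : Set X, A ⊆ {x : X | ‖x‖ = 1} → {x : X | ‖x‖ = 1} ⊆ closure A →
      ∀ φ : X → StrongDual ℝ X, IsSupportMapping φ →
        ∀ f : StrongDual ℝ X, ‖f‖ = 1 → ∀ C ∈ 𝒞, ∀ ε : ℝ, 0 < ε →
          ∃ x₀ ∈ A, semiNormOn C (f - φ x₀) < ε := by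
  intro A hAS hSA φ hφ f hf C hC ε hε
  obtain ⟨δ, hδ, x, hx, hsub⟩ := h f hf ε hε C hC
  have hxA : x ∈ closure A := hSA hx
  obtain ⟨x₀, hx₀A, hx₀d⟩ := Metric.mem_closure_iff.mp hxA δ hδ
  refine ⟨x₀, hx₀A, ?_⟩
  have hx₀ : ‖x₀‖ = 1 := hAS hx₀A
  have : φ x₀ ∈ dualDSet ({y | ‖y‖ = 1} ∩ ball x δ) := by
    refine Set.mem_biUnion ⟨hx₀, ?_⟩ (hφ x₀ hx₀)
    rw [Metric.mem_ball, dist_comm]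
    exact hx₀d
  exact hsub this
end

section
/- Let X be a real Banach space and let 𝒞 be a compatible class of bounded subsets of X. Suppose that for every norm-dense subset A ⊆ S(X) and every support mapping φ : S(X) → S(X*), the set φ(A) is τ-dense in S(X*), i.e., for every f ∈ S(X*), every C ∈ 𝒞 and every ε > 0 there exists x₀ ∈ A with ‖f − φ(x₀)‖_C < ε. Then the duality map on X is norm-τ quasicontinuous. -/
open Metric Set Pointwise

variable {X : Type*} [NormedAddCommGroup X] [NormedSpace ℝ X]

theorem stmt11 [CompleteSpace X] (𝒞 : Set (Set X)) (h𝒞 : IsCompatibleClass 𝒞)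
    (h : ∀ A : Set X, A ⊆ {x : X | ‖x‖ = 1} → {x : X | ‖x‖ = 1} ⊆ closure A →
      ∀ φ : X → StrongDual ℝ X, IsSupportMapping φ →
        ∀ f : StrongDual ℝ X, ‖f‖ = 1 → ∀ C ∈ 𝒞, ∀ ε : ℝ, 0 < ε →
          ∃ x₀ ∈ A, semiNormOn C (f - φ x₀) < ε) :
    DualityMapQuasicontinuous 𝒞 := by
  classical
  intro f hf ε hε C hC
  by_contra hcon
  push_neg at hcon
  -- bad set
  set A : Set X := {y : X | ‖y‖ = 1 ∧ ∃ g, g ∈ dualD y ∧ ε ≤ semiNormOn C (f - g)} with hA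
  have hAsub : A ⊆ {x : X | ‖x‖ = 1} := fun y hy => hy.1
  -- X is nontrivial since f has norm 1
  have hX : Nontrivial X := by
    by_contra hn
    rw [not_nontrivial_iff_subsingleton] at hn
    have : f = 0 := by
      ext x
      have : x = 0 := Subsingleton.elim x 0
      simp [this]
    rw [this] at hf
    simp at hf
  -- density of A
  have hAdense : {x : X | ‖x‖ = 1} ⊆ closure A := by
    intro x hx
    rw [Metric.mem_closure_iff]
    intro r hr
    rcases Set.not_subset.1 (hcon r hr x hx) with ⟨g, hg, hgball⟩
    rcases mem_iUnion₂.1 hg with ⟨y, hy, hgy⟩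
    refine ⟨y, ⟨hy.1, g, hgy, ?_⟩, ?_⟩
    · exact not_lt.1 hgball
    · rw [dist_comm]; exact hy.2
  -- the support mapping
  set φ : X → StrongDual ℝ X := fun y =>
    if hb : ∃ g, g ∈ dualD y ∧ ε ≤ semiNormOn C (f - g) then hb.choose
    else if hy : y = 0 then 0 else (exists_dual_vector ℝ y (norm_ne_zero_iff.2 hy)).choose with hφ
  have hφsupp : IsSupportMapping φ := by
    intro y hy1
    have hy0 : y ≠ 0 := by
      intro h0; rw [h0] at hy1; simp at hy1
    by_cases hb : ∃ g, g ∈ dualD y ∧ ε ≤ semiNormOn C (f - g)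
    · have : φ y = hb.choose := by simp [hφ, hb]
      rw [this]
      exact hb.choose_spec.1
    · have : φ y = (exists_dual_vector ℝ y (norm_ne_zero_iff.2 hy0)).choose := by simp [hφ, hb, hy0]
      rw [this]
      obtain ⟨hn, hv⟩ := (exists_dual_vector ℝ y (norm_ne_zero_iff.2 hy0)).choose_spec
      refine ⟨hn, ?_⟩
      rw [hv, hy1]
      norm_num
  rcases h A hAsub hAdense φ hφsupp f hf C hC ε hε with ⟨x₀, hx₀, hlt⟩
  rcases hx₀ with ⟨_, hb⟩
  have hb' : ∃ g, g ∈ dualD x₀ ∧ ε ≤ semiNormOn C (f - g) := hb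
  have : φ x₀ = hb'.choose := by simp [hφ, hb']
  rw [this] at hlt
  exact absurd hlt (not_lt.2 hb'.choose_spec.2)
end

section
/- Let X be a real Banach space and let A ⊆ X be nonempty and bounded with M = sup{‖x‖ : x ∈ A} and d = dist(0, A) > 0. Suppose there exist x₀ ∈ S(X) and 0 < γ < 1 such that every f ∈ B(X*) with f(x₀) > γ satisfies f(x) > 0 for all x ∈ A. Then for every λ ≥ M/(1 − γ), A ⊆ B[λx₀, λ − d(1 − γ)/(1 + γ)]. -/
open Metric Set Pointwise

variable {X : Type*} [NormedAddCommGroup X] [NormedSpace ℝ X]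

set_option maxHeartbeats 1000000 in
set_option synthInstance.maxHeartbeats 400000 in
theorem stmt15 [CompleteSpace X] (A : Set X) (hne : A.Nonempty)
    (hbd : Bornology.IsBounded A)
    (M d : ℝ) (hM : M = sSup ((fun x => ‖x‖) '' A)) (hd : d = Metric.infDist 0 A)
    (hd0 : 0 < d) (x₀ : X) (hx₀ : ‖x₀‖ = 1) (γ : ℝ) (hγ0 : 0 < γ) (hγ1 : γ < 1)
    (hS : ∀ f : StrongDual ℝ X, ‖f‖ ≤ 1 → γ < f x₀ → ∀ x ∈ A, 0 < f x) :
    ∀ lam : ℝ, M / (1 - γ) ≤ lam →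
      A ⊆ closedBall (lam • x₀) (lam - d * (1 - γ) / (1 + γ)) := by
  intro lam hlam x hx
  have hγ1' : (0:ℝ) < 1 - γ := by linarith
  have hγ1'' : (0:ℝ) < 1 + γ := by linarith
  have hxd : d ≤ ‖x‖ := by
    rw [hd]
    simpa using Metric.infDist_le_dist_of_mem (x := (0:X)) hx
  have hxM : ‖x‖ ≤ M := by
    obtain ⟨R, hR⟩ := isBounded_iff_forall_norm_le.mp hbd
    rw [hM]
    exact le_csSup ⟨R, by rintro _ ⟨y, hy, rfl⟩; exact hR y hy⟩ ⟨x, hx, rfl⟩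
  have hdM : d ≤ M := hxd.trans hxM
  have hM0 : 0 < M := lt_of_lt_of_le hd0 hdM
  have hMlam : M ≤ lam * (1 - γ) := by
    rw [div_le_iff₀ hγ1'] at hlam; linarith
  have hlam0 : 0 < lam := by nlinarith
  have hx0 : x ≠ 0 := by
    intro h; rw [h, norm_zero] at hxd; linarith
  -- Key lemma L1
  have L1 : ∀ φ : StrongDual ℝ X, ‖φ‖ ≤ 1 → γ < φ x₀ →
      d * (φ x₀ - γ) / (1 + γ) ≤ φ x := by
    intro φ hφ hφγ
    by_contra hcon
    push_neg at hcon
    obtain ⟨h, hh1, hhx⟩ := exists_dual_vector ℝ x (norm_ne_zero_iff.mpr hx0)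
    have hhx' : h x = ‖x‖ := by exact_mod_cast hhx
    have hφx0 : 0 < φ x := hS φ hφ hφγ x hx
    set t : ℝ := φ x / d with ht
    have ht0 : 0 < t := div_pos hφx0 hd0
    have htd : t * d = φ x := by
      rw [ht, div_mul_cancel₀ _ (ne_of_gt hd0)]
    have hcon' : φ x * (1 + γ) < d * (φ x₀ - γ) := (lt_div_iff₀ hγ1'').mp hcon
    have ht1 : t * (1 + γ) < φ x₀ - γ := by
      rw [ht, div_mul_eq_mul_div, div_lt_iff₀ hd0]
      nlinarith
    have h1t : (0:ℝ) < 1 + t := by linarith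
    set ψ : StrongDual ℝ X := (1 + t)⁻¹ • (φ - t • h) with hψ
    have hψn : ‖ψ‖ ≤ 1 := by
      rw [hψ]
      refine le_trans ((φ - t • h).opNorm_smul_le ((1 + t)⁻¹)) ?_
      rw [Real.norm_eq_abs, abs_of_pos (inv_pos.mpr h1t)]
      have hsm : ‖t • h‖ ≤ t := by
        refine le_trans (h.opNorm_smul_le t) ?_
        rw [Real.norm_eq_abs, abs_of_pos ht0, hh1, mul_one]
      have hb : ‖φ - t • h‖ ≤ 1 + t :=
        le_trans (norm_sub_le _ _) (by linarith)
      calc (1 + t)⁻¹ * ‖φ - t • h‖ ≤ (1 + t)⁻¹ * (1 + t) :=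
            mul_le_mul_of_nonneg_left hb (le_of_lt (inv_pos.mpr h1t))
      _ = 1 := inv_mul_cancel₀ (ne_of_gt h1t)
    have hhx₀ : |h x₀| ≤ 1 := by
      have := h.le_opNorm x₀
      rw [hh1, hx₀, Real.norm_eq_abs] at this; linarith
    have hup : h x₀ ≤ 1 := (abs_le.mp hhx₀).2
    have hψx₀ : γ < ψ x₀ := by
      have hev : ψ x₀ = (1 + t)⁻¹ * (φ x₀ - t * h x₀) := by
        rw [hψ]
        simp only [ContinuousLinearMap.smul_apply, ContinuousLinearMap.sub_apply,
          smul_eq_mul]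
      rw [hev, inv_mul_eq_div, lt_div_iff₀ h1t]
      nlinarith [mul_le_mul_of_nonneg_left hup (le_of_lt ht0)]
    have hψx : 0 < ψ x := hS ψ hψn hψx₀ x hx
    have hev : ψ x = (1 + t)⁻¹ * (φ x - t * ‖x‖) := by
      rw [hψ]
      simp only [ContinuousLinearMap.smul_apply, ContinuousLinearMap.sub_apply,
        smul_eq_mul, hhx']
    rw [hev] at hψx
    have hpos : 0 < φ x - t * ‖x‖ := by
      by_contra hc
      push_neg at hc
      nlinarith [mul_nonpos_of_nonneg_of_nonpos (le_of_lt (inv_pos.mpr h1t)) hc]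
    nlinarith [mul_le_mul_of_nonneg_left hxd (le_of_lt ht0)]
  -- Lemma L2
  have L2 : ∀ φ : StrongDual ℝ X, ‖φ‖ ≤ 1 → φ x₀ ≤ γ →
      -(M * (γ - φ x₀) / (1 - γ)) ≤ φ x := by
    intro φ hφ hφγ
    have hx₀0 : x₀ ≠ 0 := by intro h; rw [h, norm_zero] at hx₀; linarith
    obtain ⟨g, hg1, hgx₀⟩ := exists_dual_vector ℝ x₀ (norm_ne_zero_iff.mpr hx₀0)
    have hgx₀' : g x₀ = 1 := by rw [hx₀] at hgx₀; exact_mod_cast hgx₀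
    rw [neg_le]
    refine le_of_forall_pos_le_add ?_
    intro ε hε
    set t : ℝ := (γ - φ x₀) / (1 - γ) + ε / M with htdef
    have ht00 : 0 ≤ (γ - φ x₀) / (1 - γ) := div_nonneg (by linarith) (le_of_lt hγ1')
    have ht0 : 0 < t := by
      have h2 : 0 < ε / M := div_pos hε hM0
      rw [htdef]; linarith
    have h1t : (0:ℝ) < 1 + t := by linarith
    have htγ : γ - φ x₀ < t * (1 - γ) := by
      rw [htdef, add_mul, div_mul_cancel₀ _ (ne_of_gt hγ1')]
      nlinarith [div_pos hε hM0]
    set ψ : StrongDual ℝ X := (1 + t)⁻¹ • (φ + t • g) with hψ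
    have hψn : ‖ψ‖ ≤ 1 := by
      rw [hψ]
      refine le_trans ((φ + t • g).opNorm_smul_le ((1 + t)⁻¹)) ?_
      rw [Real.norm_eq_abs, abs_of_pos (inv_pos.mpr h1t)]
      have hsm : ‖t • g‖ ≤ t := by
        refine le_trans (g.opNorm_smul_le t) ?_
        rw [Real.norm_eq_abs, abs_of_pos ht0, hg1, mul_one]
      have hb : ‖φ + t • g‖ ≤ 1 + t :=
        le_trans (norm_add_le _ _) (by linarith)
      calc (1 + t)⁻¹ * ‖φ + t • g‖ ≤ (1 + t)⁻¹ * (1 + t) :=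
            mul_le_mul_of_nonneg_left hb (le_of_lt (inv_pos.mpr h1t))
      _ = 1 := inv_mul_cancel₀ (ne_of_gt h1t)
    have hψx₀ : γ < ψ x₀ := by
      have hev : ψ x₀ = (1 + t)⁻¹ * (φ x₀ + t * g x₀) := by
        rw [hψ]
        simp only [ContinuousLinearMap.smul_apply, ContinuousLinearMap.add_apply,
          smul_eq_mul]
      rw [hev, hgx₀', inv_mul_eq_div, lt_div_iff₀ h1t]
      nlinarith
    have key := L1 ψ hψn hψx₀
    have hkey0 : 0 ≤ ψ x := by
      refine le_trans ?_ key
      have hnn : 0 ≤ ψ x₀ - γ := by linarith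
      exact div_nonneg (mul_nonneg (le_of_lt hd0) hnn) (le_of_lt hγ1'')
    have hev : ψ x = (1 + t)⁻¹ * (φ x + t * g x) := by
      rw [hψ]
      simp only [ContinuousLinearMap.smul_apply, ContinuousLinearMap.add_apply,
        smul_eq_mul]
    rw [hev] at hkey0
    have h2 : 0 ≤ φ x + t * g x := by
      by_contra hc
      push_neg at hc
      nlinarith [mul_neg_of_pos_of_neg (inv_pos.mpr h1t) hc]
    have hgx : g x ≤ M := by
      have := g.le_opNorm x
      rw [hg1, Real.norm_eq_abs, one_mul] at this
      exact le_trans (le_trans (le_abs_self _) this) hxM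
    have h3 : -(t * M) ≤ φ x := by nlinarith
    have htM : t * M = M * (γ - φ x₀) / (1 - γ) + ε := by
      rw [htdef]; field_simp
    rw [htM] at h3
    linarith
  -- Main argument
  rw [mem_closedBall, dist_eq_norm, ← norm_sub_rev]
  have hcd : d * (1 - γ) / (1 + γ) ≤ d := by
    rw [div_le_iff₀ hγ1'']; nlinarith
  by_cases h0 : lam • x₀ - x = 0
  · rw [h0, norm_zero]; nlinarith
  · obtain ⟨φ, hφ1, hφv⟩ := exists_dual_vector ℝ (lam • x₀ - x) (norm_ne_zero_iff.mpr h0)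
    have hφ1' : ‖φ‖ ≤ 1 := le_of_eq hφ1
    have hφv' : φ (lam • x₀ - x) = ‖lam • x₀ - x‖ := by exact_mod_cast hφv
    have hN : ‖lam • x₀ - x‖ = lam * φ x₀ - φ x := by
      rw [← hφv', map_sub, map_smul, smul_eq_mul]
    have hs1 : φ x₀ ≤ 1 := by
      have := φ.le_opNorm x₀
      rw [hφ1, hx₀, Real.norm_eq_abs, one_mul] at this
      exact le_trans (le_abs_self _) this
    rw [hN]
    rcases le_or_gt (φ x₀) γ with hsγ | hsγ
    · have h2 := L2 φ hφ1' hsγ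
      have hA : M * (γ - φ x₀) / (1 - γ) ≤ lam * (γ - φ x₀) := by
        rw [div_le_iff₀ hγ1']
        nlinarith [mul_nonneg (sub_nonneg.mpr hsγ) (sub_nonneg.mpr hMlam)]
      linarith
    · have h1 := L1 φ hφ1' hsγ
      have hld : d ≤ lam * (1 + γ) := by nlinarith
      have hF : d * (1 - φ x₀) / (1 + γ) ≤ lam * (1 - φ x₀) := by
        rw [div_le_iff₀ hγ1'']
        nlinarith [mul_nonneg (sub_nonneg.mpr hs1) (sub_nonneg.mpr hld)]
      have hE : d * (1 - γ) / (1 + γ) - d * (φ x₀ - γ) / (1 + γ)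
          = d * (1 - φ x₀) / (1 + γ) := by ring
      linarith
end

section
/- Let X be a real Banach space and let 𝒞 be a compatible class of bounded subsets of X. Suppose that for every ε > 0 there exists δ > 0 such that for every C ∈ 𝒞 with C ⊆ B(X) and every f ∈ S(X*) there is x ∈ S(X) with S(B(X*), x, δ) ⊆ B_C(f, ε). Then for every ε > 0, every β ≥ 0, every M ≥ 2 and every 0 < η < ε, there exists K > 0 such that for every closed convex C ∈ 𝒞 with diam(C) ≤ M and dist(0, C + βB(X)) ≥ ε, there exist z₀ ∈ X and 0 < r ≤ K such that C + βB(X) ⊆ B[z₀, r] and dist(0, B[z₀, r]) > η. -/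
open Metric Set Pointwise

variable {X : Type*} [NormedAddCommGroup X] [NormedSpace ℝ X]

set_option maxHeartbeats 1000000 in
theorem stmt16 [CompleteSpace X] (𝒞 : Set (Set X)) (h𝒞 : IsCompatibleClass 𝒞)
    (h : ∀ ε : ℝ, 0 < ε → ∃ δ : ℝ, 0 < δ ∧ ∀ C ∈ 𝒞, C ⊆ closedBall (0 : X) 1 →
      ∀ f : StrongDual ℝ X, ‖f‖ = 1 →
        ∃ x : X, ‖x‖ = 1 ∧ wslice x δ ⊆ ballOn C f ε) :
    ∀ ε : ℝ, 0 < ε → ∀ β : ℝ, 0 ≤ β → ∀ M : ℝ, 2 ≤ M → ∀ η : ℝ, 0 < η → η < ε →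
      ∃ K : ℝ, 0 < K ∧ ∀ C ∈ 𝒞, IsClosed C → Convex ℝ C → Metric.diam C ≤ M →
        ε ≤ Metric.infDist 0 (C + closedBall (0 : X) β) →
        ∃ z₀ : X, ∃ r : ℝ, 0 < r ∧ r ≤ K ∧
          C + closedBall (0 : X) β ⊆ closedBall z₀ r ∧
          η < Metric.infDist 0 (closedBall z₀ r) := by
  intro ε hε β hβ M hM η hη hηε
  set η' : ℝ := (η + ε) / 2 with hη'def
  have hη'1 : η < η' := by rw [hη'def]; linarith
  have hη'2 : η' < ε := by rw [hη'def]; linarith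
  have hη'pos : 0 < η' := hη.trans hη'1
  set T : ℝ := η + M + β + 1 with hTdef
  set R' : ℝ := T + M with hR'def
  have hR' : 0 < R' := by rw [hR'def, hTdef]; linarith
  set ε₀ : ℝ := (ε - η') / (2 * R') with hε₀def
  have hε₀ : 0 < ε₀ := by
    rw [hε₀def]; apply div_pos (by linarith) (by linarith)
  have hε₀R' : ε₀ * R' = (ε - η') / 2 := by
    rw [hε₀def]; field_simp
  obtain ⟨δ, hδ, hP⟩ := h ε₀ hε₀
  set t : ℝ := max ((η' + β + R') / δ) (η' + β + 1) with htdef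
  have ht1 : η' + β + 1 ≤ t := le_max_right _ _
  have ht0 : 0 < t := by linarith
  have htδ : η' + β + R' ≤ δ * t := by
    have h1 : (η' + β + R') / δ ≤ t := le_max_left _ _
    calc η' + β + R' = δ * ((η' + β + R') / δ) := by field_simp
      _ ≤ δ * t := by apply mul_le_mul_of_nonneg_left h1 hδ.le
  refine ⟨max t (M + β), lt_max_of_lt_left ht0, ?_⟩
  intro C hC hCclosed hCconv hCdiam hCdist
  have hCne : C.Nonempty := by
    by_contra hne
    rw [Set.not_nonempty_iff_eq_empty] at hne
    rw [hne, Set.empty_add, Metric.infDist_empty] at hCdist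
    linarith
  obtain ⟨c₀, hc₀⟩ := hCne
  have hmemadd : ∀ c ∈ C, ∀ b : X, ‖b‖ ≤ β → c + b ∈ C + closedBall (0 : X) β := by
    intro c hc b hb
    exact ⟨c, hc, b, mem_closedBall_zero_iff.2 hb, rfl⟩
  have hDge : ∀ y ∈ C + closedBall (0 : X) β, ε ≤ ‖y‖ := by
    intro y hy
    have h1 : Metric.infDist 0 (C + closedBall (0 : X) β) ≤ dist (0 : X) y :=
      Metric.infDist_le_dist_of_mem hy
    rw [dist_zero_left] at h1
    linarith
  by_cases hfar : T < ‖c₀‖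
  · refine ⟨c₀, M + β, by linarith, le_max_right _ _, ?_, ?_⟩
    · rintro y ⟨c, hc, b, hb, rfl⟩
      rw [mem_closedBall, dist_eq_norm]
      have h1 : ‖c + b - c₀‖ ≤ ‖c - c₀‖ + ‖b‖ := by
        have : c + b - c₀ = (c - c₀) + b := by abel
        rw [this]; exact norm_add_le _ _
      have h2 : ‖c - c₀‖ ≤ M := by
        rw [← dist_eq_norm]
        exact (Metric.dist_le_diam_of_mem (h𝒞.bounded C hC) hc hc₀).trans hCdiam
      have h3 : ‖b‖ ≤ β := mem_closedBall_zero_iff.1 hb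
      linarith
    · have hne : (closedBall c₀ (M + β)).Nonempty :=
        ⟨c₀, mem_closedBall_self (by linarith)⟩
      by_contra hcon
      push_neg at hcon
      have h1 : Metric.infDist 0 (closedBall c₀ (M + β)) < η + 1 := by linarith
      obtain ⟨y, hy, hyd⟩ := (Metric.infDist_lt_iff hne).1 h1
      rw [dist_zero_left] at hyd
      rw [mem_closedBall, dist_eq_norm] at hy
      have h2 : ‖c₀‖ ≤ ‖y‖ + ‖y - c₀‖ := by
        calc ‖c₀‖ = ‖y - (y - c₀)‖ := by congr 1; abel
          _ ≤ ‖y‖ + ‖y - c₀‖ := norm_sub_le _ _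
      rw [hTdef] at hfar
      linarith
  · push_neg at hfar
    have hCbound : ∀ c ∈ C, ‖c‖ ≤ R' := by
      intro c hc
      have h1 : ‖c - c₀‖ ≤ M := by
        rw [← dist_eq_norm]
        exact (Metric.dist_le_diam_of_mem (h𝒞.bounded C hC) hc hc₀).trans hCdiam
      have h2 : ‖c‖ ≤ ‖c₀‖ + ‖c - c₀‖ := by
        calc ‖c‖ = ‖c₀ + (c - c₀)‖ := by congr 1; abel
          _ ≤ ‖c₀‖ + ‖c - c₀‖ := norm_add_le _ _
      rw [hR'def]; linarith
    -- Separation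
    have hDconv : Convex ℝ (C + closedBall (0 : X) β) :=
      hCconv.add (convex_closedBall _ _)
    have hdisj : Disjoint (Metric.ball (0 : X) ε) (C + closedBall (0 : X) β) := by
      rw [Set.disjoint_left]
      intro a ha hamem
      rw [mem_ball, dist_zero_right] at ha
      exact absurd (hDge a hamem) (by linarith)
    obtain ⟨f, u, hfu1, hfu2⟩ :=
      geometric_hahn_banach_open (convex_ball (0 : X) ε) isOpen_ball hDconv hdisj
    have hu0 : 0 < u := by
      have := hfu1 0 (mem_ball_self hε)
      simpa using this
    have hball : ∀ a : X, ‖a‖ ≤ ε → f a ≤ u := by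
      intro a ha
      have hsub : closedBall (0 : X) ε ⊆ {z | f z ≤ u} := by
        rw [← closure_ball (0 : X) hε.ne']
        refine closure_minimal (fun z hz => (hfu1 z hz).le)
          (isClosed_le f.continuous continuous_const)
      exact hsub (mem_closedBall_zero_iff.2 ha)
    have hfle : ‖f‖ ≤ u / ε := by
      refine ContinuousLinearMap.opNorm_le_bound f (by positivity) (fun a => ?_)
      rcases eq_or_ne a 0 with rfl | ha
      · simp
      · have hna : 0 < ‖a‖ := norm_pos_iff.2 ha
        have hnorm : ‖(ε / ‖a‖) • a‖ = ε := by
          rw [norm_smul, Real.norm_eq_abs, abs_of_pos (by positivity)]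
          field_simp
        have h1 : f ((ε / ‖a‖) • a) ≤ u := hball _ (le_of_eq hnorm)
        have h2 : f (-((ε / ‖a‖) • a)) ≤ u := by
          refine hball _ ?_
          rw [norm_neg, hnorm]
        rw [map_smul, smul_eq_mul] at h1
        rw [map_neg, map_smul, smul_eq_mul] at h2
        have h3 : ε * |f a| ≤ u * ‖a‖ := by
          rcases abs_cases (f a) with ⟨he, _⟩ | ⟨he, _⟩
          · rw [he]
            have := mul_le_mul_of_nonneg_right h1 hna.le
            rw [div_mul_eq_mul_div, mul_comm] at this
            calc ε * f a = ε / ‖a‖ * f a * ‖a‖ := by field_simp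
              _ ≤ u * ‖a‖ := mul_le_mul_of_nonneg_right h1 hna.le
          · rw [he]
            calc ε * -f a = ε / ‖a‖ * -f a * ‖a‖ := by field_simp
              _ ≤ u * ‖a‖ := by
                refine mul_le_mul_of_nonneg_right ?_ hna.le
                linarith
        rw [Real.norm_eq_abs, div_mul_eq_mul_div, le_div_iff₀ hε]
        linarith [h3]
    have hf0 : f ≠ 0 := by
      intro h0
      have hc₀D : c₀ ∈ C + closedBall (0 : X) β := by
        have := hmemadd c₀ hc₀ 0 (by simpa using hβ)
        simpa using this
      have := hfu2 c₀ hc₀D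
      rw [h0] at this
      simp at this
      linarith
    have hfpos : 0 < ‖f‖ := norm_pos_iff.2 hf0
    set f₁ : StrongDual ℝ X := ‖f‖⁻¹ • f with hf₁def
    have hf₁norm : ‖f₁‖ = 1 := by
      rw [hf₁def, norm_smul, Real.norm_eq_abs, abs_of_pos (inv_pos.2 hfpos)]
      field_simp
    have hεf : ε * ‖f‖ ≤ u := by
      have := mul_le_mul_of_nonneg_left hfle hε.le
      calc ε * ‖f‖ ≤ ε * (u / ε) := this
        _ = u := by field_simp
    have hf₁D : ∀ y ∈ C + closedBall (0 : X) β, ε ≤ f₁ y := by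
      intro y hy
      have h1 : u ≤ f y := hfu2 y hy
      have h2 : f₁ y = ‖f‖⁻¹ * f y := by
        rw [hf₁def]; simp
      rw [h2, ← sub_nonneg]
      have : ‖f‖⁻¹ * f y - ε = ‖f‖⁻¹ * (f y - ε * ‖f‖) := by
        field_simp
      rw [this]
      apply mul_nonneg (inv_pos.2 hfpos).le
      linarith
    have hf₁C : ∀ c ∈ C, ε + β ≤ f₁ c := by
      intro c hc
      have hcε : ε ≤ f₁ c := by
        have := hmemadd c hc 0 (by simpa using hβ)
        rw [add_zero] at this
        exact hf₁D c this
      by_contra hcon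
      push_neg at hcon
      have hβpos : 0 < β := by
        by_contra hβ0
        push_neg at hβ0
        have : β = 0 := le_antisymm hβ0 hβ
        rw [this] at hcon
        linarith
      set θ : ℝ := (f₁ c - ε) / β with hθdef
      have hθ1 : θ < 1 := by
        rw [hθdef, div_lt_one hβpos]; linarith
      have hθf : θ < ‖f₁‖ := by rw [hf₁norm]; exact hθ1
      obtain ⟨w, hw1, hw2⟩ := f₁.exists_lt_apply_of_lt_opNorm hθf
      rw [Real.norm_eq_abs] at hw2
      set s : ℝ := if 0 ≤ f₁ w then -β else β with hsdef
      have hbnorm : ‖s • w‖ ≤ β := by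
        rw [norm_smul, Real.norm_eq_abs]
        have : |s| = β := by
          rw [hsdef]
          split
          · rw [abs_neg, abs_of_pos hβpos]
          · rw [abs_of_pos hβpos]
        rw [this]
        nlinarith
      have hfb : f₁ (s • w) = -(β * |f₁ w|) := by
        rw [map_smul, smul_eq_mul, hsdef]
        rcases le_or_gt 0 (f₁ w) with hfw | hfw
        · rw [if_pos hfw, abs_of_nonneg hfw]; ring
        · rw [if_neg (not_le.2 hfw), abs_of_neg hfw]; ring
      have hmem : c + s • w ∈ C + closedBall (0 : X) β := hmemadd c hc _ hbnorm
      have h1 : ε ≤ f₁ (c + s • w) := hf₁D _ hmem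
      rw [map_add, hfb] at h1
      have h2 : β * θ < β * |f₁ w| := by
        exact mul_lt_mul_of_pos_left hw2 hβpos
      rw [hθdef] at h2
      have h3 : β * ((f₁ c - ε) / β) = f₁ c - ε := by field_simp
      rw [h3] at h2
      linarith
    -- Apply hypothesis
    set A : Set X := (fun y => (1 / R') • y + 0) '' C with hAdef
    have hA𝒞 : A ∈ 𝒞 := h𝒞.smul_add_mem C hC (1 / R') 0
    have hAball : A ⊆ closedBall (0 : X) 1 := by
      rintro _ ⟨c, hc, rfl⟩
      simp only [mem_closedBall_zero_iff]
      rw [add_zero, norm_smul, Real.norm_eq_abs,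
        abs_of_pos (by positivity : (0:ℝ) < 1 / R')]
      rw [div_mul_eq_mul_div, one_mul, div_le_one hR']
      exact hCbound c hc
    obtain ⟨x, hx, hxs⟩ := hP A hA𝒞 hAball f₁ hf₁norm
    have hmain : ∀ c ∈ C, ‖t • x - c‖ ≤ t - η' - β := by
      intro c hc
      by_cases hcase : ‖t • x - c‖ ≤ t - η' - β
      · exact hcase
      push_neg at hcase
      have htηβ : 0 < t - η' - β := by linarith
      have hne0 : t • x - c ≠ 0 := by
        intro h0
        rw [h0, norm_zero] at hcase
        linarith
      obtain ⟨g, hg1, hg2⟩ := exists_dual_vector ℝ (t • x - c) (norm_ne_zero_iff.2 hne0)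
      have hg2' : g (t • x - c) = ‖t • x - c‖ := by exact_mod_cast hg2
      have hgc : -R' ≤ g c := by
        have h1 : |g c| ≤ ‖g‖ * ‖c‖ := by
          have := g.le_opNorm c
          rwa [Real.norm_eq_abs] at this
        rw [hg1, one_mul] at h1
        have h2 := hCbound c hc
        have := abs_le.1 (h1.trans h2)
        linarith [this.1]
      have hgxval : t * g x - g c = ‖t • x - c‖ := by
        rw [← hg2', map_sub, map_smul, smul_eq_mul]
      have hgx : 1 - δ < g x := by
        have h1 : t * g x > t - η' - β - R' := by
          have : t * g x = ‖t • x - c‖ + g c := by linarith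
          rw [this]
          linarith
        have h2 : t - η' - β - R' ≥ t - δ * t := by linarith
        have h3 : t * g x > t * (1 - δ) := by
          calc t * g x > t - η' - β - R' := h1
            _ ≥ t - δ * t := h2
            _ = t * (1 - δ) := by ring
        have := lt_of_mul_lt_mul_left (by linarith [h3] : t * (1 - δ) < t * g x) ht0.le
        linarith
      have hgslice : g ∈ wslice x δ := ⟨hg1.le, hgx⟩
      have hgball : semiNormOn A (f₁ - g) < ε₀ := hxs hgslice
      have hmemA : (1 / R') • c + 0 ∈ A := ⟨c, hc, rfl⟩
      have hmemim : |(f₁ - g) ((1 / R') • c + 0)| ∈ (fun z => |(f₁ - g) z|) '' A :=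
        ⟨_, hmemA, rfl⟩
      have hbdd : BddAbove ((fun z => |(f₁ - g) z|) '' A) := by
        refine ⟨‖f₁ - g‖, ?_⟩
        rintro _ ⟨a, ha, rfl⟩
        have h1 : |(f₁ - g) a| ≤ ‖f₁ - g‖ * ‖a‖ := by
          have := (f₁ - g).le_opNorm a
          rwa [Real.norm_eq_abs] at this
        have h2 : ‖a‖ ≤ 1 := mem_closedBall_zero_iff.1 (hAball ha)
        calc |(f₁ - g) a| ≤ ‖f₁ - g‖ * ‖a‖ := h1
          _ ≤ ‖f₁ - g‖ * 1 := by
            apply mul_le_mul_of_nonneg_left h2 (norm_nonneg _)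
          _ = ‖f₁ - g‖ := mul_one _
      have hlt : |(f₁ - g) ((1 / R') • c + 0)| < ε₀ := by
        have h1 : |(f₁ - g) ((1 / R') • c + 0)| ≤ semiNormOn A (f₁ - g) :=
          le_csSup hbdd hmemim
        linarith
      have hval : (f₁ - g) ((1 / R') • c + 0) = (1 / R') * (f₁ c - g c) := by
        rw [add_zero, ContinuousLinearMap.sub_apply, map_smul, map_smul,
          smul_eq_mul, smul_eq_mul]
        ring
      rw [hval] at hlt
      have hfg : |f₁ c - g c| < ε₀ * R' := by
        rw [abs_mul, abs_of_pos (by positivity : (0:ℝ) < 1 / R')] at hlt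
        have := mul_lt_mul_of_pos_left hlt hR'
        calc |f₁ c - g c| = R' * (1 / R' * |f₁ c - g c|) := by field_simp
          _ < R' * ε₀ := this
          _ = ε₀ * R' := mul_comm _ _
      have hgcl : ε + β - ε₀ * R' < g c := by
        have h1 := hf₁C c hc
        have h2 := abs_le.1 hfg.le
        have h3 : f₁ c - g c < ε₀ * R' := by
          rcases lt_or_ge (f₁ c - g c) (ε₀ * R') with h | h
          · exact h
          · exfalso
            have : |f₁ c - g c| ≥ ε₀ * R' := le_trans h (le_abs_self _)
            linarith
        linarith
      have hgx1 : g x ≤ 1 := by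
        have h1 : g x ≤ |g x| := le_abs_self _
        have h2 : |g x| ≤ ‖g‖ * ‖x‖ := by
          have := g.le_opNorm x
          rwa [Real.norm_eq_abs] at this
        rw [hg1, hx, one_mul] at h2
        linarith
      have hfinal : ‖t • x - c‖ < t - η' - β := by
        have h1 : ‖t • x - c‖ = t * g x - g c := hgxval.symm
        rw [h1]
        have h2 : t * g x ≤ t := by
          calc t * g x ≤ t * 1 := mul_le_mul_of_nonneg_left hgx1 ht0.le
            _ = t := mul_one _
        rw [hε₀R'] at hgcl
        have : (ε + η') / 2 > η' := by linarith
        linarith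
      linarith
    refine ⟨t • x, t - η', by linarith, le_max_of_le_left (by linarith), ?_, ?_⟩
    · rintro y ⟨c, hc, b, hb, rfl⟩
      rw [mem_closedBall, dist_eq_norm]
      have h1 : ‖c + b - t • x‖ ≤ ‖t • x - c‖ + ‖b‖ := by
        have heq : c + b - t • x = -(t • x - c) + b := by abel
        rw [heq]
        calc ‖-(t • x - c) + b‖ ≤ ‖-(t • x - c)‖ + ‖b‖ := norm_add_le _ _
          _ = ‖t • x - c‖ + ‖b‖ := by rw [norm_neg]
      have h2 := hmain c hc
      have h3 : ‖b‖ ≤ β := mem_closedBall_zero_iff.1 hb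
      linarith
    · have hne : (closedBall (t • x) (t - η')).Nonempty :=
        ⟨t • x, mem_closedBall_self (by linarith)⟩
      by_contra hcon
      push_neg at hcon
      have h1 : Metric.infDist 0 (closedBall (t • x) (t - η')) < η' := by
        linarith
      obtain ⟨y, hy, hyd⟩ := (Metric.infDist_lt_iff hne).1 h1
      rw [dist_zero_left] at hyd
      rw [mem_closedBall, dist_eq_norm] at hy
      have h2 : ‖t • x‖ = t := by
        rw [norm_smul, Real.norm_eq_abs, abs_of_pos ht0, hx, mul_one]
      have h3 : ‖t • x‖ ≤ ‖y‖ + ‖y - t • x‖ := by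
        calc ‖t • x‖ = ‖y - (y - t • x)‖ := by congr 1; abel
          _ ≤ ‖y‖ + ‖y - t • x‖ := norm_sub_le _ _
      rw [h2] at h3
      linarith
end

section
/- Let X be a real Banach space and let 𝒞 be a compatible class of bounded subsets of X. Suppose that for every ε > 0, every M ≥ 2 and every 0 < η < ε, there exists K > 0 such that for every closed convex C ∈ 𝒞 with diam(C) ≤ M and dist(0, C) ≥ ε, there exist z₀ ∈ X and 0 < r ≤ K such that C ⊆ B[z₀, r] and dist(0, B[z₀, r]) > η. Then for every ε > 0 there exists δ > 0 such that for every C ∈ 𝒞 with C ⊆ B(X) and every f ∈ S(X*) there is x ∈ S(X) with S(B(X*), x, δ) ⊆ B_C(f, ε). -/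
open Metric Set Pointwise

variable {X : Type*} [NormedAddCommGroup X] [NormedSpace ℝ X]

set_option maxHeartbeats 1000000 in
theorem stmt17 [CompleteSpace X] (𝒞 : Set (Set X)) (h𝒞 : IsCompatibleClass 𝒞)
    (h : ∀ ε : ℝ, 0 < ε → ∀ M : ℝ, 2 ≤ M → ∀ η : ℝ, 0 < η → η < ε →
      ∃ K : ℝ, 0 < K ∧ ∀ C ∈ 𝒞, IsClosed C → Convex ℝ C → Metric.diam C ≤ M →
        ε ≤ Metric.infDist 0 C →
        ∃ z₀ : X, ∃ r : ℝ, 0 < r ∧ r ≤ K ∧ C ⊆ closedBall z₀ r ∧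
          η < Metric.infDist 0 (closedBall z₀ r)) :
    ∀ ε : ℝ, 0 < ε → ∃ δ : ℝ, 0 < δ ∧ ∀ C ∈ 𝒞, C ⊆ closedBall (0 : X) 1 →
      ∀ f : StrongDual ℝ X, ‖f‖ = 1 →
        ∃ x : X, ‖x‖ = 1 ∧ wslice x δ ⊆ ballOn C f ε := by
  
  intro ε hε
  set ε' : ℝ := min ε 1 with hε'def
  have hε'pos : 0 < ε' := lt_min hε one_pos
  have hε'le1 : ε' ≤ 1 := min_le_right _ _
  have hε'leε : ε' ≤ ε := min_le_left _ _
  set t : ℝ := ε' / 2 with htdef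
  set σ : ℝ := ε' ^ 2 / 48 with hσdef
  have ht : 0 < t := by positivity
  have ht1 : t ≤ 1 := by rw [htdef]; linarith
  have hσ : 0 < σ := by positivity
  have hσsmall : σ ≤ 1 / 48 := by rw [hσdef]; nlinarith
  obtain ⟨K, hK, hmain⟩ := h (1 - 2 * σ) (by nlinarith) 2 le_rfl (1 - 3 * σ)
    (by nlinarith) (by nlinarith)
  refine ⟨σ / (1 + K), by positivity, ?_⟩
  intro C hC hC1 f hf
  -- choose u with ‖u‖ ≤ 1 and f u > 1 - σ
  obtain ⟨u₀, hu₀, hfu₀⟩ := f.exists_lt_apply_of_lt_opNorm (r := 1 - σ) (by rw [hf]; linarith)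
  obtain ⟨u, hu1, hu2⟩ : ∃ u : X, ‖u‖ ≤ 1 ∧ 1 - σ < f u := by
    rcases le_or_gt 0 (f u₀) with h0 | h0
    · exact ⟨u₀, hu₀.le, by rwa [Real.norm_eq_abs, abs_of_nonneg h0] at hfu₀⟩
    · exact ⟨-u₀, by simpa using hu₀.le,
        by rw [map_neg]; rwa [Real.norm_eq_abs, abs_of_neg h0] at hfu₀⟩
  have hfu1 : f u ≤ 1 := by
    calc f u ≤ |f u| := le_abs_self _
    _ = ‖f u‖ := (Real.norm_eq_abs _).symm
    _ ≤ ‖f‖ * ‖u‖ := f.le_opNorm u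
    _ ≤ 1 := by rw [hf]; simpa using hu1
  -- the absolutely convex set A
  set A : Set X := closure (absConvexHull ℝ (C ∪ {u})) with hAdef
  have hA𝒞 : A ∈ 𝒞 := h𝒞.closedAbsConvexHull_mem _ (h𝒞.union_singleton_mem C hC u)
  have hAconv : Convex ℝ A := convex_absConvexHull.closure
  have hAbal : Balanced ℝ A := balanced_absConvexHull.closure
  have hAclosed : IsClosed A := isClosed_closure
  have hballbal : Balanced ℝ (closedBall (0 : X) 1) := by
    intro a ha
    rintro _ ⟨v, hv, rfl⟩
    rw [mem_closedBall, dist_zero_right] at hv ⊢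
    calc ‖a • v‖ = ‖a‖ * ‖v‖ := norm_smul a v
    _ ≤ 1 * 1 := mul_le_mul ha hv (norm_nonneg _) zero_le_one
    _ = 1 := one_mul 1
  have hA1 : ∀ y ∈ A, ‖y‖ ≤ 1 := by
    have hsub : A ⊆ closedBall (0 : X) 1 := by
      apply closure_minimal _ isClosed_closedBall
      apply absConvexHull_min _ ⟨hballbal, convex_closedBall (0 : X) 1⟩
      apply Set.union_subset hC1
      intro v hv
      rw [Set.mem_singleton_iff] at hv
      rw [hv, mem_closedBall, dist_zero_right]
      exact hu1
    intro y hy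
    have := hsub hy
    rwa [mem_closedBall, dist_zero_right] at this
  have huA : u ∈ A := subset_closure (subset_absConvexHull (Set.mem_union_right _ rfl))
  have h0A : (0 : X) ∈ A := by
    have h := hAbal (0 : ℝ) (by norm_num) (smul_mem_smul_set huA)
    simpa using h
  -- the set D
  set φ : X → X := fun y => t • y + u with hφdef
  set D : Set X := (φ '' A) ∩ {w | f u - t * σ ≤ f w} with hDdef
  have hD𝒞 : D ∈ 𝒞 :=
    h𝒞.subset_mem _ (h𝒞.smul_add_mem A hA𝒞 t u) D Set.inter_subset_left
  have himg_eq : φ '' A = (fun w => t⁻¹ • (w - u)) ⁻¹' A := by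
    ext w
    constructor
    · rintro ⟨y, hy, rfl⟩
      have : t⁻¹ • (φ y - u) = y := by
        simp only [hφdef, add_sub_cancel_right, smul_smul, inv_mul_cancel₀ ht.ne', one_smul]
      simpa [Set.mem_preimage, this]
    · intro hw
      refine ⟨t⁻¹ • (w - u), hw, ?_⟩
      simp only [hφdef, smul_smul, mul_inv_cancel₀ ht.ne', one_smul, sub_add_cancel]
  have himgclosed : IsClosed (φ '' A) := by
    rw [himg_eq]
    exact hAclosed.preimage (by fun_prop)
  have hDclosed : IsClosed D :=
    himgclosed.inter (isClosed_le continuous_const f.continuous)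
  have himgconv : Convex ℝ (φ '' A) := by
    rintro w₁ ⟨y₁, hy₁, rfl⟩ w₂ ⟨y₂, hy₂, rfl⟩ a b ha hb hab
    refine ⟨a • y₁ + b • y₂, hAconv hy₁ hy₂ ha hb hab, ?_⟩
    obtain rfl : b = 1 - a := by linarith
    simp only [hφdef]
    module
  have hDconv : Convex ℝ D :=
    himgconv.inter (convex_halfSpace_ge ⟨fun a b => map_add f a b, fun c v => map_smul f c v⟩
      (f u - t * σ))
  have hDsub : D ⊆ closedBall u t := by
    rintro w ⟨⟨y, hy, rfl⟩, -⟩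
    have hy1 : ‖y‖ ≤ 1 := hA1 y hy
    rw [mem_closedBall, dist_eq_norm]
    have : φ y - u = t • y := by simp [hφdef]
    rw [this, norm_smul, Real.norm_eq_abs, abs_of_pos ht]
    nlinarith
  have hDdiam : Metric.diam D ≤ 2 := by
    calc Metric.diam D ≤ Metric.diam (closedBall u t) :=
      Metric.diam_mono hDsub Metric.isBounded_closedBall
    _ ≤ 2 * t := Metric.diam_closedBall ht.le
    _ ≤ 2 := by nlinarith
  have huD : u ∈ D := by
    constructor
    · exact ⟨0, h0A, by simp [hφdef]⟩
    · show f u - t * σ ≤ f u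
      nlinarith
  have hDf : ∀ w ∈ D, 1 - 2 * σ ≤ f w := by
    rintro w ⟨-, hw⟩
    have hw' : f u - t * σ ≤ f w := hw
    nlinarith
  have hDdist : 1 - 2 * σ ≤ Metric.infDist 0 D := by
    apply le_of_not_gt
    intro hlt
    obtain ⟨w, hw, hd⟩ := (Metric.infDist_lt_iff ⟨u, huD⟩).1 hlt
    have h1 := hDf w hw
    have h2 : f w ≤ ‖w‖ := by
      calc f w ≤ |f w| := le_abs_self _
      _ = ‖f w‖ := (Real.norm_eq_abs _).symm
      _ ≤ ‖f‖ * ‖w‖ := f.le_opNorm w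
      _ = ‖w‖ := by rw [hf, one_mul]
    rw [dist_zero_left] at hd
    linarith
  obtain ⟨z₀, r, hr0, hrK, hsub, hdist⟩ := hmain D hD𝒞 hDclosed hDconv hDdiam hDdist
  -- basic facts about z₀
  have huB : dist u z₀ ≤ r := mem_closedBall.1 (hsub huD)
  have hRub : ‖z₀‖ ≤ 1 + r := by
    have h1 : ‖z₀‖ - ‖u‖ ≤ ‖z₀ - u‖ := norm_sub_norm_le z₀ u
    have h2 : ‖z₀ - u‖ = dist u z₀ := by rw [dist_comm, dist_eq_norm]
    linarith
  have hrR : r ≤ ‖z₀‖ := by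
    by_contra hcon
    push_neg at hcon
    have h0mem : (0 : X) ∈ closedBall z₀ r := by
      rw [mem_closedBall, dist_zero_left]
      exact hcon.le
    have hzero : Metric.infDist 0 (closedBall z₀ r) = 0 := Metric.infDist_zero_of_mem h0mem
    rw [hzero] at hdist
    nlinarith
  have hRpos : 0 < ‖z₀‖ := lt_of_lt_of_le hr0 hrR
  have hgap : 1 - 3 * σ < ‖z₀‖ - r := by
    have hfrac : 0 ≤ 1 - r / ‖z₀‖ := by
      rw [sub_nonneg]
      exact (div_le_one hRpos).2 hrR
    have hp : (1 - r / ‖z₀‖) • z₀ ∈ closedBall z₀ r := by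
      rw [mem_closedBall, dist_eq_norm]
      have he : (1 - r / ‖z₀‖) • z₀ - z₀ = -((r / ‖z₀‖) • z₀) := by module
      rw [he, norm_neg, norm_smul, Real.norm_eq_abs, abs_of_nonneg (by positivity),
        div_mul_cancel₀ _ hRpos.ne']
    have hle := Metric.infDist_le_dist_of_mem (x := (0 : X)) hp
    rw [dist_zero_left] at hle
    have hnorm : ‖(1 - r / ‖z₀‖) • z₀‖ = ‖z₀‖ - r := by
      rw [norm_smul, Real.norm_eq_abs, abs_of_nonneg hfrac]
      field_simp
    rw [hnorm] at hle
    linarith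
  have hR1K : ‖z₀‖ ≤ 1 + K := by linarith
  -- the point x
  refine ⟨‖z₀‖⁻¹ • z₀, ?_, ?_⟩
  · rw [norm_smul, Real.norm_eq_abs, abs_of_nonneg (inv_nonneg.2 hRpos.le),
      inv_mul_cancel₀ hRpos.ne']
  intro g hg
  obtain ⟨hg1, hg2⟩ := hg
  have hgz₀ : (1 - σ / (1 + K)) * ‖z₀‖ < g z₀ := by
    have h1 : 1 - σ / (1 + K) < g (‖z₀‖⁻¹ • z₀) := hg2
    rw [map_smul, smul_eq_mul] at h1
    have h2 := mul_lt_mul_of_pos_right h1 hRpos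
    calc (1 - σ / (1 + K)) * ‖z₀‖ < ‖z₀‖⁻¹ * g z₀ * ‖z₀‖ := h2
    _ = g z₀ := by field_simp
  have hδR : σ / (1 + K) * ‖z₀‖ ≤ σ := by
    calc σ / (1 + K) * ‖z₀‖ ≤ σ / (1 + K) * (1 + K) := by
          apply mul_le_mul_of_nonneg_left hR1K (by positivity)
    _ = σ := div_mul_cancel₀ _ (by positivity)
  have hkey : ∀ w ∈ D, 1 - 4 * σ < g w := by
    intro w hw
    have hwb : ‖z₀ - w‖ ≤ r := by
      have := mem_closedBall.1 (hsub hw)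
      rwa [dist_comm, dist_eq_norm] at this
    have h1 : g z₀ - g w ≤ ‖z₀ - w‖ := by
      calc g z₀ - g w = g (z₀ - w) := (map_sub g z₀ w).symm
      _ ≤ |g (z₀ - w)| := le_abs_self _
      _ ≤ ‖g‖ * ‖z₀ - w‖ := by rw [← Real.norm_eq_abs]; exact g.le_opNorm _
      _ ≤ 1 * ‖z₀ - w‖ := mul_le_mul_of_nonneg_right hg1 (norm_nonneg _)
      _ = ‖z₀ - w‖ := one_mul _
    have hexp : (1 - σ / (1 + K)) * ‖z₀‖ = ‖z₀‖ - σ / (1 + K) * ‖z₀‖ := by ring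
    rw [hexp] at hgz₀
    linarith
  have hgu_ub : g u ≤ 1 := by
    calc g u ≤ |g u| := le_abs_self _
    _ = ‖g u‖ := (Real.norm_eq_abs _).symm
    _ ≤ ‖g‖ * ‖u‖ := g.le_opNorm u
    _ ≤ 1 * 1 := mul_le_mul hg1 hu1 (norm_nonneg _) (le_trans (norm_nonneg _) hg1)
    _ = 1 := one_mul 1
  have hbound : ∀ y ∈ A, -σ ≤ f y → -(4 * σ) / t < g y := by
    intro y hy hfy
    have hwD : φ y ∈ D := by
      refine ⟨⟨y, hy, rfl⟩, ?_⟩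
      show f u - t * σ ≤ f (t • y + u)
      rw [map_add, map_smul, smul_eq_mul]
      nlinarith
    have hgw := hkey _ hwD
    have hφg : g (φ y) = t * g y + g u := by
      simp only [hφdef, map_add, map_smul, smul_eq_mul]
    rw [hφg] at hgw
    have h4 : -(4 * σ) < g y * t := by nlinarith
    exact (div_lt_iff₀ ht).2 h4
  -- main estimate on C
  have hCbound : ∀ y ∈ C, |f y - g y| ≤ ε' / 2 := by
    intro y hy
    have hyA : y ∈ A := subset_closure (subset_absConvexHull (Set.mem_union_left _ hy))
    have hy1 : ‖y‖ ≤ 1 := hA1 y hyA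
    have hfy1 : |f y| ≤ 1 := by
      rw [← Real.norm_eq_abs]
      calc ‖f y‖ ≤ ‖f‖ * ‖y‖ := f.le_opNorm y
      _ ≤ 1 := by rw [hf]; simpa using hy1
    have hvy : (f y) • u ∈ A :=
      hAbal (f y) (by rwa [Real.norm_eq_abs]) (smul_mem_smul_set huA)
    have hvy' : (-(f y)) • u ∈ A :=
      hAbal _ (by rw [Real.norm_eq_abs, abs_neg]; exact hfy1) (smul_mem_smul_set huA)
    have hyA' : -y ∈ A := by
      have h := hAbal (-1 : ℝ) (by norm_num) (smul_mem_smul_set hyA)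
      simpa using h
    set z : X := (2⁻¹ : ℝ) • y + (2⁻¹ : ℝ) • ((-(f y)) • u) with hzdef
    have hzA : z ∈ A := hAconv hyA hvy' (by norm_num) (by norm_num) (by norm_num)
    have hzA' : -z ∈ A := by
      have he : -z = (2⁻¹ : ℝ) • (-y) + (2⁻¹ : ℝ) • ((f y) • u) := by
        rw [hzdef]; module
      rw [he]
      exact hAconv hyA' hvy (by norm_num) (by norm_num) (by norm_num)
    have hfz : f z = f y * (1 - f u) / 2 := by
      simp only [hzdef, map_add, map_smul, smul_eq_mul, map_neg, neg_mul]
      ring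
    have hfz_abs : |f z| ≤ σ / 2 := by
      rw [hfz, abs_div, abs_mul]
      have h1 : |1 - f u| ≤ σ := by
        rw [abs_of_nonneg (by linarith)]
        linarith
      have h2 : |f y| * |1 - f u| ≤ 1 * σ :=
        mul_le_mul hfy1 h1 (abs_nonneg _) zero_le_one
      rw [abs_of_pos (by norm_num : (0:ℝ) < 2)]
      linarith
    have hfz' := abs_le.1 hfz_abs
    have hgz1 : -(4 * σ) / t < g z := hbound z hzA (by linarith)
    have hgz2 : -(4 * σ) / t < g (-z) := hbound _ hzA' (by rw [map_neg]; linarith)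
    rw [map_neg] at hgz2
    have hgz_abs : |g z| ≤ 4 * σ / t := by
      rw [abs_le]
      constructor
      · rw [neg_div] at hgz1; linarith
      · rw [neg_div] at hgz2; linarith
    have hgz_eq : g z = (g y - f y * g u) / 2 := by
      simp only [hzdef, map_add, map_smul, smul_eq_mul, map_neg, neg_mul]
      ring
    have h2 : |g y - f y * g u| ≤ 8 * σ / t := by
      have : |g y - f y * g u| = 2 * |g z| := by
        rw [hgz_eq, abs_div, abs_of_pos (by norm_num : (0:ℝ) < 2)]
        ring
      rw [this]
      calc 2 * |g z| ≤ 2 * (4 * σ / t) := by linarith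
      _ = 8 * σ / t := by ring
    have hgu_lb : 1 - 4 * σ < g u := hkey u huD
    have h3 : |f y - f y * g u| ≤ 4 * σ := by
      rw [show f y - f y * g u = f y * (1 - g u) by ring, abs_mul]
      have h1 : |1 - g u| ≤ 4 * σ := by
        rw [abs_of_nonneg (by linarith)]
        linarith
      calc |f y| * |1 - g u| ≤ 1 * (4 * σ) :=
        mul_le_mul hfy1 h1 (abs_nonneg _) zero_le_one
      _ = 4 * σ := one_mul _
    have htri : |f y - g y| ≤ |f y - f y * g u| + |f y * g u - g y| := abs_sub_le _ _ _
    have h2' : |f y * g u - g y| ≤ 8 * σ / t := by rwa [abs_sub_comm] at h2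
    have hst : 8 * σ / t = ε' / 3 := by
      rw [hσdef, htdef]
      field_simp
      ring
    have h4σ : 4 * σ ≤ ε' / 12 := by rw [hσdef]; nlinarith
    rw [hst] at h2'
    linarith
  show semiNormOn C (f - g) < ε
  have hle : semiNormOn C (f - g) ≤ ε' / 2 := by
    apply Real.sSup_le
    · rintro v ⟨y, hy, rfl⟩
      simp only [ContinuousLinearMap.sub_apply]
      exact hCbound y hy
    · positivity
  have : ε' / 2 < ε := by linarith
  linarith
end

section
/- Let X be a real Banach space and let 𝒞 be a compatible class of bounded subsets of X. The following are equivalent: (d) for every ε > 0 there exists δ > 0 such that for every C ∈ 𝒞 with C ⊆ B(X) and every f ∈ S(X*) there is x ∈ S(X) with S(B(X*), x, δ) ⊆ B_C(f, ε); (e) for every ε > 0 there exists δ > 0 such that for every C ∈ 𝒞 with C ⊆ B(X) and every f ∈ S(X*) there is x ∈ S(X) with D(S(X) ∩ B(x, δ)) ⊆ B_C(f, ε). -/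
open Metric Set Pointwise

variable {X : Type*} [NormedAddCommGroup X] [NormedSpace ℝ X]

set_option linter.unusedSectionVars false in
theorem my_ekeland [CompleteSpace X] (F : X → ℝ) (hFc : Continuous F)
    (hF0 : ∀ z, 0 ≤ F z) (α : ℝ) (hα : 0 < α) (x₀ : X) :
    ∃ y : X, F y + α * ‖y - x₀‖ ≤ F x₀ ∧ ∀ z, F y ≤ F z + α * ‖z - y‖ := by
  set Sle : X → X → Prop := fun a b => F a + α * ‖a - b‖ ≤ F b with hSle
  have hrefl : ∀ a, Sle a a := by intro a; simp [hSle]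
  have htrans : ∀ a b c, Sle a b → Sle b c → Sle a c := by
    intro a b c hab hbc
    have h1 : ‖a - c‖ ≤ ‖a - b‖ + ‖b - c‖ := by
      simpa using norm_sub_le_norm_sub_add_norm_sub a b c
    nlinarith [hab, hbc]
  have hmono : ∀ a b, Sle a b → F a ≤ F b := by
    intro a b hab
    nlinarith [norm_nonneg (a - b)]
  -- step
  have step : ∀ (b : X) (n : ℕ), ∃ a, Sle a b ∧ ∀ w, Sle w b → F a ≤ F w + (1/2)^n := by
    intro b n
    set s : Set ℝ := F '' {w | Sle w b} with hs
    have hne : s.Nonempty := ⟨F b, b, hrefl b, rfl⟩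
    have hbdd : BddBelow s := ⟨0, by rintro _ ⟨w, _, rfl⟩; exact hF0 w⟩
    have hlt : sInf s < sInf s + (1/2)^n := by nlinarith [pow_pos (by norm_num : (0:ℝ) < 1/2) n]
    obtain ⟨v, hvs, hv⟩ := exists_lt_of_csInf_lt hne hlt
    obtain ⟨a, ha, rfl⟩ := hvs
    refine ⟨a, ha, fun w hw => ?_⟩
    have : sInf s ≤ F w := csInf_le hbdd ⟨w, hw, rfl⟩
    linarith
  choose next hnext1 hnext2 using step
  set seq : ℕ → X := fun n => Nat.rec x₀ (fun n a => next a n) n with hseq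
  have hseq0 : seq 0 = x₀ := rfl
  have hseqS : ∀ n, seq (n + 1) = next (seq n) n := fun n => rfl
  have h1 : ∀ n, Sle (seq (n+1)) (seq n) := fun n => hnext1 (seq n) n
  have h2 : ∀ n w, Sle w (seq n) → F (seq (n+1)) ≤ F w + (1/2)^n :=
    fun n => hnext2 (seq n) n
  have h3 : ∀ n m, n ≤ m → Sle (seq m) (seq n) := by
    intro n m hnm
    induction m with
    | zero => simpa [Nat.le_zero.mp hnm] using hrefl (seq 0)
    | succ k ih =>
      rcases Nat.lt_or_ge n (k+1) with h | h
      · exact htrans _ _ _ (h1 k) (ih (Nat.lt_succ_iff.mp h))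
      · have : n = k + 1 := le_antisymm hnm h
        subst this; exact hrefl _
  have hanti : ∀ n m, n ≤ m → F (seq m) ≤ F (seq n) := fun n m h => hmono _ _ (h3 n m h)
  -- F (seq n) converges
  have hbdd : BddBelow (Set.range (fun n => F (seq n))) := ⟨0, by rintro _ ⟨n, rfl⟩; exact hF0 _⟩
  set L : ℝ := ⨅ n, F (seq n) with hL
  have hLle : ∀ n, L ≤ F (seq n) := fun n => ciInf_le hbdd n
  have htendF : Filter.Tendsto (fun n => F (seq n)) Filter.atTop (nhds L) :=
    tendsto_atTop_ciInf (fun a b hab => hanti a b hab) hbdd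
  have hcauchy : CauchySeq seq := by
    rw [Metric.cauchySeq_iff']
    intro ε hε
    have : ∀ᶠ n in Filter.atTop, F (seq n) < L + α * ε := by
      apply htendF.eventually_lt_const
      nlinarith
    obtain ⟨N, hN⟩ := this.exists_forall_of_atTop
    refine ⟨N, fun n hn => ?_⟩
    have hs := h3 N n hn
    have : α * ‖seq n - seq N‖ ≤ F (seq N) - F (seq n) := by
      simp only [hSle] at hs; linarith
    have h4 : F (seq N) - F (seq n) < α * ε := by
      have := hLle n
      have := hN N le_rfl
      linarith
    rw [dist_eq_norm]
    nlinarith [norm_nonneg (seq n - seq N)]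
  obtain ⟨y, hy⟩ := cauchySeq_tendsto_of_complete hcauchy
  have h5 : ∀ n, Sle y (seq n) := by
    intro n
    have hev : ∀ᶠ m in Filter.atTop, F (seq m) + α * ‖seq m - seq n‖ ≤ F (seq n) :=
      Filter.eventually_atTop.mpr ⟨n, fun m hm => h3 n m hm⟩
    have htend : Filter.Tendsto (fun m => F (seq m) + α * ‖seq m - seq n‖)
        Filter.atTop (nhds (F y + α * ‖y - seq n‖)) := by
      apply Filter.Tendsto.add
      · exact (hFc.tendsto y).comp hy
      · exact (Filter.Tendsto.const_mul α (((continuous_norm.comp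
          (continuous_id.sub continuous_const)).tendsto y).comp hy))
    exact le_of_tendsto htend hev
  refine ⟨y, by simpa [hseq0] using h5 0, ?_⟩
  intro z
  by_cases hz : Sle z y
  · -- then F y ≤ F z
    have key : ∀ n, F y ≤ F z + (1/2)^n := by
      intro n
      have hzn : Sle z (seq n) := htrans _ _ _ hz (h5 n)
      have := h2 n z hzn
      have := hmono _ _ (h5 (n+1))
      linarith
    have htz : Filter.Tendsto (fun n : ℕ => F z + (1/2:ℝ)^n) Filter.atTop (nhds (F z)) := by
      have := tendsto_pow_atTop_nhds_zero_of_lt_one (le_of_lt one_half_pos) (by norm_num : (1/2:ℝ) < 1)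
      simpa using Filter.Tendsto.add (tendsto_const_nhds : Filter.Tendsto (fun _ : ℕ => F z) _ _) this
    have : F y ≤ F z := ge_of_tendsto htz (Filter.Eventually.of_forall key)
    nlinarith [norm_nonneg (z - y)]
  · simp only [hSle, not_le] at hz
    nlinarith [hz]

theorem my_subdiff (y : X) (hy : y ≠ 0) (f : StrongDual ℝ X) (α : ℝ) (hα : 0 ≤ α)
    (key : ∀ (u : X) (t : ℝ), f u + t * ‖y‖ ≤ ‖u + t • y‖ + α * ‖u‖) :
    ∃ g : StrongDual ℝ X, ‖g‖ ≤ 1 ∧ g y = ‖y‖ ∧ ‖f - g‖ ≤ α := by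
  classical
  set N : X × X → ℝ := fun p => ‖p.1‖ + α * ‖p.2‖ with hN
  set T : (X × ℝ) →ₗ[ℝ] X × X :=
    LinearMap.prod (LinearMap.fst ℝ X ℝ + (LinearMap.snd ℝ X ℝ).smulRight y)
      (LinearMap.fst ℝ X ℝ) with hT
  have hTapp : ∀ p : X × ℝ, T p = (p.1 + p.2 • y, p.1) := fun p => rfl
  have hTinj : Function.Injective T := by
    intro p q hpq
    have h1 : p.1 + p.2 • y = q.1 + q.2 • y := congrArg Prod.fst hpq
    have h2 : p.1 = q.1 := congrArg Prod.snd hpq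
    have h3 : p.2 • y = q.2 • y := by
      rw [h2] at h1
      exact add_left_cancel h1
    have h4 : p.2 = q.2 := by
      by_contra h
      have := sub_eq_zero.mpr h3
      rw [← sub_smul] at this
      rcases smul_eq_zero.mp this with h' | h'
      · exact h (sub_eq_zero.mp h')
      · exact hy h'
    exact Prod.ext h2 h4
  set e := LinearEquiv.ofInjective T hTinj with he
  set L : (X × ℝ) →ₗ[ℝ] ℝ :=
    (f : X →ₗ[ℝ] ℝ).comp (LinearMap.fst ℝ X ℝ) + (LinearMap.snd ℝ X ℝ).smulRight ‖y‖ with hL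
  have hLapp : ∀ p : X × ℝ, L p = f p.1 + p.2 * ‖y‖ := fun p => by
    simp [hL, smul_eq_mul]
  set pm : (X × X) →ₗ.[ℝ] ℝ := ⟨LinearMap.range T, L.comp e.symm.toLinearMap⟩ with hpm
  have hesymm : ∀ p : X × ℝ, e.symm ⟨T p, LinearMap.mem_range_self T p⟩ = p := by
    intro p
    apply e.injective
    apply Subtype.ext
    rw [e.apply_symm_apply]
    exact (LinearEquiv.ofInjective_apply T p).symm
  have hpmT : ∀ p : X × ℝ, pm ⟨T p, LinearMap.mem_range_self T p⟩ = L p := by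
    intro p
    show L (e.symm ⟨T p, _⟩) = L p
    rw [hesymm]
  have hdom : ∀ x : pm.domain, pm x ≤ N x := by
    rintro ⟨x, hx⟩
    obtain ⟨p, rfl⟩ := hx
    rw [hpmT p, hLapp]
    have := key p.1 p.2
    simpa [hN, hTapp] using this
  obtain ⟨G, hG1, hG2⟩ := exists_extension_of_le_sublinear pm N
    (fun c hc x => by
      simp only [hN, Prod.smul_fst, Prod.smul_snd, norm_smul, Real.norm_eq_abs,
        abs_of_pos hc]; ring)
    (fun x y => by
      simp only [hN, Prod.fst_add, Prod.snd_add]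
      have := norm_add_le x.1 y.1
      have := norm_add_le x.2 y.2
      nlinarith)
    hdom
  set g0 : X →ₗ[ℝ] ℝ := G.comp (LinearMap.inl ℝ X X) with hg0
  have hg0le : ∀ u : X, |g0 u| ≤ ‖u‖ := by
    intro u
    have h1 : g0 u ≤ ‖u‖ := by
      have := hG2 (u, 0)
      simpa [hN, hg0] using this
    have h2 : -(g0 u) ≤ ‖u‖ := by
      have h := hG2 (-u, 0)
      simp only [hN, norm_neg, norm_zero, mul_zero, add_zero] at h
      have hneg : G ((-u, 0) : X × X) = -(G ((u, 0) : X × X)) := by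
        have : ((-u, 0) : X × X) = -(u, 0) := by simp
        rw [this, map_neg]
      rw [hneg] at h
      simpa [hg0] using h
    exact abs_le.mpr ⟨by linarith, h1⟩
  set g : StrongDual ℝ X := LinearMap.mkContinuous g0 1 (fun u => by
    simpa using hg0le u) with hg
  have hgnorm : ‖g‖ ≤ 1 := LinearMap.mkContinuous_norm_le g0 zero_le_one _
  have hGT : ∀ p : X × ℝ, G (T p) = L p := by
    intro p
    have := hG1 ⟨T p, LinearMap.mem_range_self T p⟩
    rw [hpmT p] at this
    exact this
  have hgy : g y = ‖y‖ := by
    have := hGT (0, 1)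
    simp only [hTapp, hLapp] at this
    simp only [one_smul, zero_add, map_zero] at this
    simpa [hg, hg0] using this
  have hdiff : ∀ u : X, |f u - g u| ≤ α * ‖u‖ := by
    intro u
    have hfu : G (u, u) = f u := by
      have := hGT (u, 0)
      simp only [hTapp, hLapp] at this
      simpa using this
    have hsplit : G (u, u) = g u + G (0, u) := by
      have : ((u, u) : X × X) = (u, 0) + (0, u) := by simp
      rw [this, map_add]
      rfl
    have h1 : f u - g u ≤ α * ‖u‖ := by
      have := hG2 (0, u)
      simp only [hN, norm_zero] at this
      rw [← hfu, hsplit]; linarith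
    have h2 : -(f u - g u) ≤ α * ‖u‖ := by
      have := hG2 (0, -u)
      simp only [hN, norm_zero] at this
      have hneg : G (0, -u) = -(G (0, u)) := by
        have : ((0, -u) : X × X) = -(0, u) := by simp
        rw [this, map_neg]
      rw [hneg] at this
      rw [← hfu, hsplit]
      simp only [norm_neg] at this
      linarith
    exact abs_le.mpr ⟨by linarith [h2], h1⟩
  refine ⟨g, hgnorm, hgy, ?_⟩
  apply ContinuousLinearMap.opNorm_le_bound _ hα
  intro u
  simpa [Real.norm_eq_abs] using hdiff u

theorem my_bpb [CompleteSpace X] (ε : ℝ) (hε : 0 < ε) (hε1 : ε < 1)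
    (f : StrongDual ℝ X) (hf : ‖f‖ ≤ 1) (x₀ : X) (hx₀ : ‖x₀‖ = 1)
    (hfx : 1 - ε ^ 2 / 2 < f x₀) :
    ∃ (y : X) (g : StrongDual ℝ X), ‖y‖ = 1 ∧ ‖g‖ = 1 ∧ g y = 1 ∧
      ‖y - x₀‖ < 2 * ε ∧ ‖f - g‖ ≤ ε := by
  set F : X → ℝ := fun z => ‖z‖ - f z with hF
  have hF0 : ∀ z, 0 ≤ F z := by
    intro z
    have h1 : ‖f z‖ ≤ ‖f‖ * ‖z‖ := f.le_opNorm z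
    have h2 : f z ≤ ‖f z‖ := le_abs_self _
    have h3 : ‖f‖ * ‖z‖ ≤ ‖z‖ := by nlinarith [norm_nonneg z]
    simp only [hF, sub_nonneg]
    linarith
  have hFc : Continuous F := continuous_norm.sub f.continuous
  have hFx₀ : F x₀ < ε ^ 2 / 2 := by simp only [hF, hx₀]; linarith
  obtain ⟨y₁, hek1, hek2⟩ := my_ekeland F hFc hF0 (ε / 2) (by linarith) x₀
  simp only [hF] at hek1 hek2 hFx₀
  have hdist : ‖y₁ - x₀‖ < ε := by
    have h0 : 0 ≤ ‖y₁‖ - f y₁ := by simpa [hF] using hF0 y₁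
    have hlt : ε / 2 * ‖y₁ - x₀‖ < ε ^ 2 / 2 := by linarith
    by_contra h
    push_neg at h
    have : ε / 2 * ε ≤ ε / 2 * ‖y₁ - x₀‖ := mul_le_mul_of_nonneg_left h (by linarith)
    nlinarith
  have hy₁norm : 1 - ε ≤ ‖y₁‖ := by
    have h := abs_norm_sub_norm_le y₁ x₀
    rw [hx₀] at h
    have := (abs_le.mp h).1
    linarith
  have hy₁ : y₁ ≠ 0 := by
    intro h
    rw [h, norm_zero] at hy₁norm
    linarith
  have key : ∀ (u : X) (t : ℝ), f u + t * ‖y₁‖ ≤ ‖u + t • y₁‖ + (ε / 2) * ‖u‖ := by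
    intro u t
    rcases le_or_gt t 0 with ht | ht
    · have h1 : f u ≤ ‖u‖ := by
        have := hF0 u
        simp only [hF, sub_nonneg] at this; linarith
      have h2 : ‖u‖ ≤ ‖u + t • y₁‖ + ‖t • y₁‖ := by
        have := norm_add_le (u + t • y₁) (-(t • y₁))
        simpa using this
      rw [norm_smul, Real.norm_eq_abs, abs_of_nonpos ht] at h2
      nlinarith [norm_nonneg u]
    · have hz := hek2 (y₁ + t⁻¹ • u)
      have hmap : f (y₁ + t⁻¹ • u) = f y₁ + t⁻¹ * f u := by
        rw [map_add, map_smul]; rfl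
      rw [hmap] at hz
      have hsub : ‖y₁ + t⁻¹ • u - y₁‖ = t⁻¹ * ‖u‖ := by
        rw [add_sub_cancel_left, norm_smul, Real.norm_eq_abs, abs_of_pos (inv_pos.mpr ht)]
      rw [hsub] at hz
      -- hz : ‖y₁‖ - f y₁ ≤ ‖y₁ + t⁻¹ • u‖ - (f y₁ + t⁻¹ * f u) + ε/2 * (t⁻¹ * ‖u‖)
      have hnorm : t * ‖y₁ + t⁻¹ • u‖ = ‖u + t • y₁‖ := by
        rw [← norm_smul_of_nonneg (le_of_lt ht), smul_add, smul_smul,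
          mul_inv_cancel₀ (ne_of_gt ht), one_smul, add_comm]
      have hmul := mul_le_mul_of_nonneg_left hz (le_of_lt ht)
      have hexp : t * (‖y₁ + t⁻¹ • u‖ - (f y₁ + t⁻¹ * f u) + ε / 2 * (t⁻¹ * ‖u‖)) =
          t * ‖y₁ + t⁻¹ • u‖ - t * f y₁ - (t * t⁻¹) * f u + ε / 2 * ((t * t⁻¹) * ‖u‖) := by
        ring
      rw [hexp, mul_inv_cancel₀ (ne_of_gt ht), hnorm, one_mul, one_mul] at hmul
      nlinarith [hmul]
  obtain ⟨g, hg1, hg2, hg3⟩ := my_subdiff y₁ hy₁ f (ε / 2) (by linarith) key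
  set y : X := ‖y₁‖⁻¹ • y₁ with hy
  have hy₁pos : 0 < ‖y₁‖ := by linarith
  have hynorm : ‖y‖ = 1 := by
    rw [hy, norm_smul, Real.norm_eq_abs, abs_of_pos (inv_pos.mpr hy₁pos),
      inv_mul_cancel₀ (ne_of_gt hy₁pos)]
  have hgy : g y = 1 := by
    rw [hy, map_smul, smul_eq_mul, hg2, inv_mul_cancel₀ (ne_of_gt hy₁pos)]
  have hgnorm : ‖g‖ = 1 := by
    refine le_antisymm hg1 ?_
    have h := g.le_opNorm y
    rw [hgy, hynorm, mul_one, norm_one] at h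
    linarith
  refine ⟨y, g, hynorm, hgnorm, hgy, ?_, by linarith⟩
  have h1 : ‖y - y₁‖ = |1 - ‖y₁‖| := by
    rw [hy]
    have heq : ‖y₁‖⁻¹ • y₁ - y₁ = (‖y₁‖⁻¹ - 1) • y₁ := by rw [sub_smul, one_smul]
    rw [heq, norm_smul, Real.norm_eq_abs]
    have habs : |‖y₁‖⁻¹ - 1| * ‖y₁‖ = |(‖y₁‖⁻¹ - 1) * ‖y₁‖| := by
      rw [abs_mul, abs_of_pos hy₁pos]
    have hval : (‖y₁‖⁻¹ - 1) * ‖y₁‖ = 1 - ‖y₁‖ := by field_simp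
    rw [habs, hval]
  have h2 : |1 - ‖y₁‖| ≤ ‖y₁ - x₀‖ := by
    have := abs_norm_sub_norm_le y₁ x₀
    rw [hx₀, abs_sub_comm] at this
    exact this
  calc ‖y - x₀‖ ≤ ‖y - y₁‖ + ‖y₁ - x₀‖ := norm_sub_le_norm_sub_add_norm_sub _ _ _
    _ ≤ ‖y₁ - x₀‖ + ‖y₁ - x₀‖ := by rw [h1]; linarith
    _ < 2 * ε := by linarith

set_option maxHeartbeats 1000000 in
theorem stmt18 [CompleteSpace X] (𝒞 : Set (Set X)) (h𝒞 : IsCompatibleClass 𝒞) :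
    (∀ ε : ℝ, 0 < ε → ∃ δ : ℝ, 0 < δ ∧ ∀ C ∈ 𝒞, C ⊆ closedBall (0 : X) 1 →
      ∀ f : StrongDual ℝ X, ‖f‖ = 1 →
        ∃ x : X, ‖x‖ = 1 ∧ wslice x δ ⊆ ballOn C f ε) ↔
    (∀ ε : ℝ, 0 < ε → ∃ δ : ℝ, 0 < δ ∧ ∀ C ∈ 𝒞, C ⊆ closedBall (0 : X) 1 →
      ∀ f : StrongDual ℝ X, ‖f‖ = 1 →
        ∃ x : X, ‖x‖ = 1 ∧
          dualDSet ({y | ‖y‖ = 1} ∩ ball x δ) ⊆ ballOn C f ε) := by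
  constructor
  · -- (d) → (e)
    intro hd ε hε
    obtain ⟨δ, hδ, h⟩ := hd ε hε
    refine ⟨δ, hδ, fun C hC hCb f hf => ?_⟩
    obtain ⟨x, hx, hsl⟩ := h C hC hCb f hf
    refine ⟨x, hx, fun g hg => hsl ?_⟩
    simp only [dualDSet, Set.mem_iUnion, exists_prop] at hg
    obtain ⟨y, ⟨hy1, hy2⟩, hgn, hgy⟩ := hg
    refine ⟨le_of_eq hgn, ?_⟩
    have hxy : ‖y - x‖ < δ := by
      rw [← dist_eq_norm]
      exact mem_ball.mp hy2
    have hb : |g (y - x)| ≤ ‖y - x‖ := by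
      have := g.le_opNorm (y - x)
      rw [hgn, one_mul] at this
      exact this.trans_eq' rfl |>.trans_eq rfl
    have hgx : g x = 1 - g (y - x) := by
      have : g (y - x) = g y - g x := map_sub g y x
      rw [this, hgy]; ring
    have := (abs_le.mp hb).2
    rw [hgx]; linarith
  · -- (e) → (d)
    intro he ε hε
    obtain ⟨δ₀, hδ₀, h⟩ := he (ε / 2) (by linarith)
    set ε₁ : ℝ := min (δ₀ / 4) (min (ε / 8) (1 / 2)) with hε₁def
    have hε₁pos : 0 < ε₁ := by
      simp only [hε₁def, lt_min_iff]
      refine ⟨by linarith, by linarith, by norm_num⟩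
    have hε₁a : ε₁ ≤ δ₀ / 4 := min_le_left _ _
    have hε₁b : ε₁ ≤ ε / 8 := le_trans (min_le_right _ _) (min_le_left _ _)
    have hε₁c : ε₁ ≤ 1 / 2 := le_trans (min_le_right _ _) (min_le_right _ _)
    set δ : ℝ := min (ε₁ ^ 2 / 4) (ε / 8) with hδdef
    have hδpos : 0 < δ := by
      simp only [hδdef, lt_min_iff]
      constructor
      · positivity
      · linarith
    have hδa : δ ≤ ε₁ ^ 2 / 4 := min_le_left _ _
    have hδb : δ ≤ ε / 8 := min_le_right _ _
    have hδ1 : δ ≤ 1 / 16 := by nlinarith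
    refine ⟨δ, hδpos, fun C hC hCb f hf => ?_⟩
    obtain ⟨x, hx, hD⟩ := h C hC hCb f hf
    refine ⟨x, hx, fun g hg => ?_⟩
    obtain ⟨hgle, hgx⟩ := hg
    have hgxpos : 0 < g x := by linarith
    have hgnorm : 1 - δ < ‖g‖ := by
      have h1 : g x ≤ ‖g x‖ := le_abs_self _
      have h2 : ‖g x‖ ≤ ‖g‖ * ‖x‖ := g.le_opNorm x
      rw [hx, mul_one] at h2
      linarith
    have hgpos : 0 < ‖g‖ := by linarith
    set f' : StrongDual ℝ X := ‖g‖⁻¹ • g with hf'def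
    have hnf' : ‖f'‖ = 1 := by
      rw [hf'def, norm_smul, Real.norm_eq_abs, abs_of_pos (inv_pos.mpr hgpos),
        inv_mul_cancel₀ (ne_of_gt hgpos)]
    have hinvge : 1 ≤ ‖g‖⁻¹ := by
      rw [le_inv_comm₀ one_pos hgpos]
      simpa using hgle
    have hf'x : 1 - ε₁ ^ 2 / 2 < f' x := by
      have h1 : f' x = ‖g‖⁻¹ * g x := by rw [hf'def]; rfl
      have h2 : g x ≤ ‖g‖⁻¹ * g x := le_mul_of_one_le_left (le_of_lt hgxpos) hinvge
      have h3 : δ < ε₁ ^ 2 / 2 := by nlinarith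
      rw [h1]; linarith
    obtain ⟨y, k, hyn, hkn, hky, hyx, hfk⟩ :=
      my_bpb ε₁ hε₁pos (by linarith) f' (le_of_eq hnf') x hx hf'x
    have hkmem : k ∈ dualDSet ({y : X | ‖y‖ = 1} ∩ ball x δ₀) := by
      refine Set.mem_biUnion ?_ ⟨hkn, hky⟩
      refine ⟨hyn, ?_⟩
      rw [mem_ball, dist_eq_norm]
      linarith
    have hfkC : semiNormOn C (f - k) < ε / 2 := hD hkmem
    -- bound ‖k - g‖
    have hf'g : ‖f' - g‖ ≤ δ := by
      have heq : f' - g = (‖g‖⁻¹ - 1) • g := by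
        rw [hf'def]; ext z
        simp only [ContinuousLinearMap.sub_apply, ContinuousLinearMap.smul_apply, smul_eq_mul]; ring
      rw [heq, norm_smul, Real.norm_eq_abs, abs_of_nonneg (by linarith : (0:ℝ) ≤ ‖g‖⁻¹ - 1)]
      have : (‖g‖⁻¹ - 1) * ‖g‖ = 1 - ‖g‖ := by field_simp
      rw [this]; linarith
    have hkg : ‖k - g‖ ≤ ε₁ + δ := by
      have h1 : ‖k - g‖ ≤ ‖k - f'‖ + ‖f' - g‖ := norm_sub_le_norm_sub_add_norm_sub _ _ _
      have h2 : ‖k - f'‖ = ‖f' - k‖ := norm_sub_rev _ _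
      rw [norm_sub_rev] at hfk
      linarith
    -- final bound
    show semiNormOn C (f - g) < ε
    have hbddfk : BddAbove ((fun z => |(f - k) z|) '' C) := by
      refine ⟨‖f - k‖, ?_⟩
      rintro _ ⟨z, hz, rfl⟩
      have h1 : ‖(f - k) z‖ ≤ ‖f - k‖ * ‖z‖ := (f - k).le_opNorm z
      have h2 : ‖z‖ ≤ 1 := by simpa using hCb hz
      calc |(f - k) z| = ‖(f - k) z‖ := (Real.norm_eq_abs _).symm
        _ ≤ ‖f - k‖ * ‖z‖ := h1
        _ ≤ ‖f - k‖ * 1 := mul_le_mul_of_nonneg_left h2 (norm_nonneg _)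
        _ = ‖f - k‖ := mul_one _
    have hsn_nonneg : 0 ≤ semiNormOn C (f - k) := by
      apply Real.sSup_nonneg
      rintro _ ⟨z, hz, rfl⟩
      exact abs_nonneg _
    have hle : semiNormOn C (f - g) ≤ semiNormOn C (f - k) + (ε₁ + δ) := by
      apply Real.sSup_le
      · rintro _ ⟨z, hz, rfl⟩
        have hz1 : ‖z‖ ≤ 1 := by simpa using hCb hz
        have h1 : |(f - k) z| ≤ semiNormOn C (f - k) :=
          le_csSup hbddfk ⟨z, hz, rfl⟩
        have h2 : |(k - g) z| ≤ ε₁ + δ := by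
          have := (k - g).le_opNorm z
          calc |(k - g) z| = ‖(k - g) z‖ := (Real.norm_eq_abs _).symm
            _ ≤ ‖k - g‖ * ‖z‖ := this
            _ ≤ (ε₁ + δ) * 1 := by
                apply mul_le_mul hkg hz1 (norm_nonneg z) (by linarith)
            _ = ε₁ + δ := mul_one _
        have heq : (f - g) z = (f - k) z + (k - g) z := by
          simp only [ContinuousLinearMap.sub_apply]; ring
        calc |(f - g) z| = |(f - k) z + (k - g) z| := by rw [heq]
          _ ≤ |(f - k) z| + |(k - g) z| := abs_add_le _ _
          _ ≤ semiNormOn C (f - k) + (ε₁ + δ) := add_le_add h1 h2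
      · positivity
    linarith
end
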